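/- arXiv:1503.00607 — 6 statements merged into one kernel-verified Lean document; each statement's English description precedes it below -/
import Mathlib

section
/- Let 0 ≤ d ≤ n−1 and let X = (x₁,…,x_{n−d}) be n−d indeterminates. Given a set B = {β₁,…,β_n} of n pairwise distinct elements of K, the family of the binom(n,d) polynomials {R(X,B') : B' ⊆ B, |B'| = d} is a basis of the K-vector space S_{(n−d,d)}. -/
noncomputable section

def SymSub (K : Type*) [Field K] (ℓ d : ℕ) : Submodule K (MvPolynomial (Fin ℓ) K) where
  carrier := {h | h.IsSymmetric ∧ ∀ i, h.degreeOf i ≤ d}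
  add_mem' := by
    rintro p q ⟨hp1, hp2⟩ ⟨hq1, hq2⟩
    exact ⟨hp1.add hq1,
      fun i => le_trans (MvPolynomial.degreeOf_add_le i p q) (max_le (hp2 i) (hq2 i))⟩
  zero_mem' := by
    refine ⟨?_, fun i => by simp⟩
    intro e; simp
  smul_mem' := by
    rintro c p ⟨hp1, hp2⟩
    refine ⟨hp1.smul c, fun i => ?_⟩
    rw [MvPolynomial.smul_eq_C_mul]
    exact le_trans (MvPolynomial.degreeOf_C_mul_le p i c) (hp2 i)

open MvPolynomial

open Classical in
lemma vanish_of_eval_zero {K : Type*} [Field K] (d : ℕ) :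
    ∀ (ℓ : ℕ) (h : MvPolynomial (Fin ℓ) K), (∀ i, h.degreeOf i ≤ d) →
    ∀ S : Finset K, ℓ + d ≤ S.card →
    (∀ x : Fin ℓ → K, Function.Injective x → (∀ i, x i ∈ S) → eval x h = 0) → h = 0 := by
  intro ℓ
  induction ℓ with
  | zero =>
    intro h _ S _ hev
    obtain ⟨a, rfl⟩ := MvPolynomial.C_surjective (Fin 0) h
    have := hev (fun i => i.elim0) (fun i => i.elim0) (fun i => i.elim0)
    simpa using this
  | succ ℓ ih =>
    intro h hdeg S hS hev
    have hq : finSuccEquiv K ℓ h = 0 := by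
      apply Polynomial.ext
      intro m
      rw [Polynomial.coeff_zero]
      apply ih
      · intro i
        exact (degreeOf_coeff_finSuccEquiv h i m).trans (hdeg i.succ)
      · exact le_trans (by omega) hS
      · intro x hx hxS
        have hr : Polynomial.map (eval x) (finSuccEquiv K ℓ h) = 0 := by
          apply Polynomial.eq_zero_of_natDegree_lt_card_of_eval_eq_zero'
            _ (S \ Finset.image x Finset.univ)
          · intro t ht
            rw [Finset.mem_sdiff] at ht
            rw [← eval_eq_eval_mv_eval']
            apply hev
            · intro a1 a2 hcons
              rcases Fin.eq_zero_or_eq_succ a1 with rfl | ⟨a1', rfl⟩ <;>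
                rcases Fin.eq_zero_or_eq_succ a2 with rfl | ⟨a2', rfl⟩
              · rfl
              · exfalso; apply ht.2
                simp only [Fin.cons_zero, Fin.cons_succ] at hcons
                exact Finset.mem_image.2 ⟨a2', Finset.mem_univ _, hcons.symm⟩
              · exfalso; apply ht.2
                simp only [Fin.cons_zero, Fin.cons_succ] at hcons
                exact Finset.mem_image.2 ⟨a1', Finset.mem_univ _, hcons⟩
              · simp only [Fin.cons_succ] at hcons
                exact congrArg Fin.succ (hx hcons)
            · intro i
              rcases Fin.eq_zero_or_eq_succ i with rfl | ⟨i', rfl⟩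
              · simpa using ht.1
              · simpa using hxS i'
          · have h1 : (Polynomial.map (eval x) (finSuccEquiv K ℓ h)).natDegree ≤
                (finSuccEquiv K ℓ h).natDegree := Polynomial.natDegree_map_le
            have h2 : (finSuccEquiv K ℓ h).natDegree = h.degreeOf 0 := natDegree_finSuccEquiv h
            have h3 : h.degreeOf 0 ≤ d := hdeg 0
            have h4 : (Finset.image x Finset.univ).card = ℓ := by
              rw [Finset.card_image_of_injective _ hx, Finset.card_univ, Fintype.card_fin]
            have h6 : S.card - ℓ ≤ (S \ Finset.image x Finset.univ).card := by
              have := Finset.le_card_sdiff (Finset.image x Finset.univ) S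
              omega
            omega
        have := congrArg (fun p => Polynomial.coeff p m) hr
        simpa using this
    have := congrArg (finSuccEquiv K ℓ).symm hq
    simpa using this

lemma degAux {K : Type*} [Field K] {n ℓ : ℕ} (b : Fin n → K) (B' : Finset (Fin n)) (i : Fin ℓ) :
    MvPolynomial.degreeOf i
      (∏ s : Fin ℓ, ∏ j ∈ B', (X s - C (b j)) : MvPolynomial (Fin ℓ) K) ≤ B'.card := by
  refine le_trans (degreeOf_prod_le _ _ _) ?_
  have key : ∀ s : Fin ℓ,
      degreeOf i (∏ j ∈ B', (X s - C (b j)) : MvPolynomial (Fin ℓ) K)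
        ≤ if s = i then B'.card else 0 := by
    intro s
    refine le_trans (degreeOf_prod_le _ _ _) ?_
    have h1 : ∀ j ∈ B', degreeOf i (X s - C (b j) : MvPolynomial (Fin ℓ) K)
        ≤ if s = i then 1 else 0 := by
      intro j _
      rw [sub_eq_add_neg, ← MvPolynomial.C_neg]
      refine le_trans (degreeOf_add_le _ _ _) ?_
      rw [degreeOf_C, degreeOf_X]
      rcases eq_or_ne s i with rfl | hne
      · simp
      · simp [hne, Ne.symm hne]
    refine le_trans (Finset.sum_le_sum h1) ?_
    rcases eq_or_ne s i with rfl | hne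
    · simp
    · simp [hne]
  refine le_trans (Finset.sum_le_sum (fun s _ => key s)) ?_
  simp

lemma symAux {K : Type*} [Field K] {n ℓ : ℕ} (b : Fin n → K) (B' : Finset (Fin n)) :
    MvPolynomial.IsSymmetric
      (∏ s : Fin ℓ, ∏ j ∈ B', (X s - C (b j)) : MvPolynomial (Fin ℓ) K) := by
  intro σ
  rw [map_prod]
  rw [show (fun s : Fin ℓ => rename σ (∏ j ∈ B', (X s - C (b j)) : MvPolynomial (Fin ℓ) K))
      = fun s => ∏ j ∈ B', (X (σ s) - C (b j)) from ?_]
  · exact Equiv.prod_comp σ (fun t => ∏ j ∈ B', (X t - C (b j)))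
  · funext s
    rw [map_prod]
    exact Finset.prod_congr rfl fun j _ => by rw [map_sub, rename_X, rename_C]

def evalL {K : Type*} [CommSemiring K] {σ : Type*} (x : σ → K) :
    MvPolynomial σ K →ₗ[K] K where
  toFun := MvPolynomial.eval x
  map_add' := by simp
  map_smul' := fun c p => by simp [MvPolynomial.smul_eq_C_mul]

/-- For `0 ≤ d ≤ n-1` and `B = {β₁,…,β_n}` pairwise distinct in `K`, the family of the
`binom(n,d)` polynomials `R(X,B') = ∏_{s, j∈B'} (x_s - β_j)`, for `B' ⊆ B` with `|B'| = d`,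
is a basis of `S_{(n-d,d)}`. -/
theorem symmetric_lagrange_basis (K : Type*) [Field K] (n d : ℕ) (hd : d < n)
    (b : Fin n → K) (hb : Function.Injective b) :
    LinearIndependent K
      (fun B' : {s : Finset (Fin n) // s.card = d} =>
        (∏ s : Fin (n - d), ∏ j ∈ B'.1,
          (MvPolynomial.X s - MvPolynomial.C (b j)) : MvPolynomial (Fin (n - d)) K)) ∧
    Submodule.span K
      (Set.range (fun B' : {s : Finset (Fin n) // s.card = d} =>
        (∏ s : Fin (n - d), ∏ j ∈ B'.1,
          (MvPolynomial.X s - MvPolynomial.C (b j)) : MvPolynomial (Fin (n - d)) K)))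
      = SymSub K (n - d) d := by
  classical
  set v := (fun B' : {s : Finset (Fin n) // s.card = d} =>
        (∏ s : Fin (n - d), ∏ j ∈ B'.1,
          (MvPolynomial.X s - MvPolynomial.C (b j)) : MvPolynomial (Fin (n - d)) K)) with hv
  have hcompl : ∀ B' : {s : Finset (Fin n) // s.card = d}, (B'.1ᶜ).card = n - d := fun B' => by
    simp [Finset.card_compl, B'.2]
  set pt : {s : Finset (Fin n) // s.card = d} → Fin (n - d) → K :=
    fun B' s => b (B'.1ᶜ.orderIsoOfFin (hcompl B') s) with hpt
  have heval : ∀ (y : Fin (n - d) → K) B',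
      eval y (v B') = ∏ s, ∏ j ∈ B'.1, (y s - b j) := by
    intro y B'
    simp [hv]
  have hdiag : ∀ B', eval (pt B') (v B') ≠ 0 := by
    intro B'
    rw [heval, Finset.prod_ne_zero_iff]
    intro s _
    rw [Finset.prod_ne_zero_iff]
    intro j hj hzero
    have h1 : pt B' s = b j := sub_eq_zero.mp hzero
    have h2 := hb h1
    exact Finset.mem_compl.mp ((B'.1ᶜ.orderIsoOfFin (hcompl B') s).2) (h2 ▸ hj)
  have hoff : ∀ B'' B', B'' ≠ B' → eval (pt B'') (v B') = 0 := by
    intro B'' B' hne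
    rw [heval]
    have hnotsub : ¬ B'.1 ⊆ B''.1 := by
      intro hsub
      exact hne (Subtype.ext (Finset.eq_of_subset_of_card_le hsub
        (by rw [B'.2, B''.2])).symm)
    obtain ⟨j, hjB', hjnB''⟩ := Finset.not_subset.mp hnotsub
    have hjc : j ∈ B''.1ᶜ := Finset.mem_compl.mpr hjnB''
    obtain ⟨s, hs⟩ := (B''.1ᶜ.orderIsoOfFin (hcompl B'')).surjective ⟨j, hjc⟩
    refine Finset.prod_eq_zero (Finset.mem_univ s) (Finset.prod_eq_zero hjB' ?_)
    have : pt B'' s = b j := by rw [hpt]; simp only []; rw [hs]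
    rw [this, sub_self]
  -- linear independence
  have hLI : LinearIndependent K v := by
    rw [linearIndependent_iff']
    intro t g hsum i hit
    have hev := congrArg (eval (pt i)) hsum
    rw [map_sum, map_zero] at hev
    have hterm : ∀ j ∈ t, j ≠ i → eval (pt i) (g j • v j) = 0 := by
      intro j _ hji
      rw [smul_eq_C_mul, map_mul, hoff i j (Ne.symm hji), mul_zero]
    rw [Finset.sum_eq_single i hterm (fun hni => absurd hit hni)] at hev
    rw [smul_eq_C_mul, map_mul, eval_C] at hev
    exact (mul_eq_zero.mp hev).resolve_right (hdiag i)
  -- membership in SymSub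
  have hmem : ∀ B', v B' ∈ SymSub K (n - d) d := by
    intro B'
    refine ⟨symAux b B'.1, fun i => ?_⟩
    have := degAux (ℓ := n - d) b B'.1 i
    rwa [B'.2] at this
  -- injectivity of evaluations on SymSub
  have hinj : ∀ h ∈ SymSub K (n - d) d, (∀ B', eval (pt B') h = 0) → h = 0 := by
    rintro h ⟨hsym, hdeg⟩ hzero
    apply vanish_of_eval_zero d (n - d) h hdeg (Finset.image b Finset.univ)
    · rw [Finset.card_image_of_injective _ hb, Finset.card_univ, Fintype.card_fin]
      omega
    · intro x hx hxS
      have hex : ∀ i, ∃ a, b a = x i := by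
        intro i
        obtain ⟨a, _, ha⟩ := Finset.mem_image.mp (hxS i)
        exact ⟨a, ha⟩
      choose f hf using hex
      have hfinj : Function.Injective f := by
        intro i1 i2 h12
        exact hx (by rw [← hf i1, ← hf i2, h12])
      have hcard : (Finset.image f Finset.univ).card = n - d := by
        rw [Finset.card_image_of_injective _ hfinj, Finset.card_univ, Fintype.card_fin]
      have hTcard : ((Finset.image f Finset.univ)ᶜ : Finset (Fin n)).card = d := by
        rw [Finset.card_compl, hcard, Fintype.card_fin]
        omega
      set B'' : {s : Finset (Fin n) // s.card = d} := ⟨(Finset.image f Finset.univ)ᶜ, hTcard⟩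
        with hB''
      have hcc : B''.1ᶜ = Finset.image f Finset.univ := by
        rw [hB'', compl_compl]
      set e := B''.1ᶜ.orderIsoOfFin (hcompl B'') with he
      have hmem' : ∀ s : Fin (n - d), f s ∈ B''.1ᶜ := by
        intro s
        rw [hcc]
        exact Finset.mem_image.mpr ⟨s, Finset.mem_univ s, rfl⟩
      set g : Fin (n - d) → Fin (n - d) := fun s => e.symm ⟨f s, hmem' s⟩ with hg
      have hginj : Function.Injective g := by
        intro s1 s2 h12
        apply hfinj
        have := congrArg (fun z => (e z : Fin n)) h12
        simpa [hg] using this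
      have hgbij : Function.Bijective g := (Finite.injective_iff_bijective).mp hginj
      set σ : Equiv.Perm (Fin (n - d)) := Equiv.ofBijective g hgbij with hσ
      have hxeq : x = (pt B'') ∘ σ := by
        funext s
        have : (e (g s) : Fin n) = f s := by simp [hg]
        simp only [Function.comp_apply, hσ, Equiv.ofBijective_apply, hpt]
        rw [← he, this, hf]
      rw [hxeq, ← eval_rename, hsym σ]
      exact hzero B''
  -- the linear evaluation map
  set Φ : MvPolynomial (Fin (n - d)) K →ₗ[K] ({s : Finset (Fin n) // s.card = d} → K) :=
    LinearMap.pi (fun B' => evalL (pt B')) with hΦ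
  set Ψ := Φ.comp (SymSub K (n - d) d).subtype with hΨ
  have hΨinj : Function.Injective Ψ := by
    rw [← LinearMap.ker_eq_bot]
    apply LinearMap.ker_eq_bot'.mpr
    intro m hm
    apply Subtype.ext
    apply hinj m.1 m.2
    intro B'
    exact congrFun hm B'
  haveI : Module.Finite K (SymSub K (n - d) d) := Module.Finite.of_injective Ψ hΨinj
  have hrank1 : Module.finrank K (SymSub K (n - d) d)
      ≤ Fintype.card {s : Finset (Fin n) // s.card = d} := by
    have := LinearMap.finrank_le_finrank_of_injective hΨinj
    rwa [Module.finrank_pi] at this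
  set v' : {s : Finset (Fin n) // s.card = d} → SymSub K (n - d) d :=
    fun B' => ⟨v B', hmem B'⟩ with hv'
  have hLI' : LinearIndependent K v' :=
    LinearIndependent.of_comp (SymSub K (n - d) d).subtype hLI
  have hrank2 : Fintype.card {s : Finset (Fin n) // s.card = d}
      ≤ Module.finrank K (SymSub K (n - d) d) := hLI'.fintype_card_le_finrank
  have hspan' : Submodule.span K (Set.range v') = ⊤ :=
    hLI'.span_eq_top_of_card_eq_finrank' (le_antisymm hrank2 hrank1)
  refine ⟨hLI, ?_⟩
  have hr : Set.range v = (SymSub K (n - d) d).subtype '' (Set.range v') := by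
    rw [← Set.range_comp]
    rfl
  rw [hr, Submodule.span_image, hspan', Submodule.map_subtype_top]

end
end

section
/- Let 0 ≤ d ≤ n−1, let X = (x₁,…,x_{n−d}) be n−d indeterminates, and let B = {β₁,…,β_n} be a set of n pairwise distinct elements of K. Then every polynomial h ∈ S_{(n−d,d)} satisfies h(X) = Σ_{B'⊆B, |B'|=d} h(B∖B') · R(X,B') / R(B∖B', B'), where h(B∖B') denotes the evaluation of h at the n−d elements of B∖B' (in any order, since h is symmetric). -/
noncomputable section

/-- `R(Y,Z) := ∏_{y∈Y, z∈Z} (y - z)`, for the finite families indexed by `S` and `T`. -/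
def RR {K : Type*} [CommRing K] {ι κ : Type*} (S : Finset ι) (T : Finset κ)
    (y : ι → K) (z : κ → K) : K :=
  ∏ i ∈ S, ∏ j ∈ T, (y i - z j)

open MvPolynomial in
lemma mv_vanish {K : Type*} [Field K] (ℓ : ℕ) :
    ∀ (d : ℕ) (B : Finset K), ℓ + d < B.card + 1 →
    ∀ f : MvPolynomial (Fin ℓ) K, (∀ i, f.degreeOf i ≤ d) →
    (∀ x : Fin ℓ → K, Function.Injective x → (∀ i, x i ∈ B) → MvPolynomial.eval x f = 0) →
    f = 0 := by
  classical
  induction ℓ with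
  | zero =>
    intro d B _ f _ hvan
    have h0 := hvan Fin.elim0 (Function.injective_of_subsingleton _) (fun i => i.elim0)
    rw [MvPolynomial.eq_C_of_isEmpty f] at h0 ⊢
    rw [MvPolynomial.eval_C] at h0
    rw [h0, map_zero]
  | succ ℓ ih =>
    intro d B hcard f hdeg hvan
    have key : ∀ k, (MvPolynomial.finSuccEquiv K ℓ f).coeff k = 0 := by
      intro k
      apply ih d B (by omega)
      · intro i
        exact (MvPolynomial.degreeOf_coeff_finSuccEquiv f i k).trans (hdeg i.succ)
      · intro y hy hyB
        have hg : Polynomial.map (MvPolynomial.eval y) (MvPolynomial.finSuccEquiv K ℓ f) = 0 := by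
          apply Polynomial.eq_zero_of_natDegree_lt_card_of_eval_eq_zero' _
            (B \ Finset.univ.image y)
          · intro t ht
            rw [← MvPolynomial.eval_eq_eval_mv_eval']
            apply hvan
            · apply Fin.cons_injective_of_injective _ hy
              intro ⟨i, hi⟩
              exact (Finset.mem_sdiff.mp ht).2
                (Finset.mem_image.mpr ⟨i, Finset.mem_univ i, hi⟩)
            · intro i
              refine Fin.cases ?_ ?_ i
              · simpa using (Finset.mem_sdiff.mp ht).1
              · intro j; simpa using hyB j
          · have h1 : Polynomial.natDegree
                (Polynomial.map (MvPolynomial.eval y) (MvPolynomial.finSuccEquiv K ℓ f)) ≤ d := by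
              refine (Polynomial.natDegree_map_le).trans ?_
              rw [MvPolynomial.natDegree_finSuccEquiv]
              exact hdeg 0
            have h2 : (Finset.univ.image y).card ≤ ℓ := by
              simpa using Finset.card_image_le (s := (Finset.univ : Finset (Fin ℓ))) (f := y)
            have h3 := Finset.le_card_sdiff (Finset.univ.image y) B
            omega
        have hc := congrArg (fun p => p.coeff k) hg
        simpa using hc
    have hF : MvPolynomial.finSuccEquiv K ℓ f = 0 := Polynomial.ext fun k => by simp [key k]
    simpa using (map_eq_zero_iff _ (AlgEquiv.injective (MvPolynomial.finSuccEquiv K ℓ))).mp hF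

open MvPolynomial in
lemma eval_eq_of_range_eq {K : Type*} [CommSemiring K] {ℓ : ℕ}
    (h : MvPolynomial (Fin ℓ) K) (hsym : h.IsSymmetric) (u v : Fin ℓ → K)
    (hv : Function.Injective v)
    (huv : Set.range u = Set.range v) : MvPolynomial.eval u h = MvPolynomial.eval v h := by
  have hex : ∀ i, ∃ j, u j = v i := fun i => by
    have hm : v i ∈ Set.range u := by rw [huv]; exact Set.mem_range_self i
    exact hm
  choose π₀ hπ₀ using hex
  have hπinj : Function.Injective π₀ := fun a c hac => hv (by rw [← hπ₀ a, ← hπ₀ c, hac])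
  have hbij : Function.Bijective π₀ := Finite.injective_iff_bijective.mp hπinj
  let π : Equiv.Perm (Fin ℓ) := Equiv.ofBijective π₀ hbij
  have hcomp : u ∘ π = v := funext fun i => hπ₀ i
  calc MvPolynomial.eval u h = MvPolynomial.eval u (MvPolynomial.rename π h) := by rw [hsym π]
    _ = MvPolynomial.eval (u ∘ π) h := by rw [MvPolynomial.eval_rename]
    _ = MvPolynomial.eval v h := by rw [hcomp]

open MvPolynomial in
lemma degreeOf_term_le {K : Type*} [Field K] {n ℓ : ℕ} (b : Fin n → K)
    (B' : Finset (Fin n)) (i : Fin ℓ) :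
    MvPolynomial.degreeOf i
      (∏ s : Fin ℓ, ∏ j ∈ B', (MvPolynomial.X s - MvPolynomial.C (b j))) ≤ B'.card := by
  classical
  refine (MvPolynomial.degreeOf_prod_le i _ _).trans ?_
  have hs : ∀ s : Fin ℓ,
      MvPolynomial.degreeOf i (∏ j ∈ B', (MvPolynomial.X s - MvPolynomial.C (b j))) ≤
        if i = s then B'.card else 0 := by
    intro s
    refine (MvPolynomial.degreeOf_prod_le i _ _).trans ?_
    have hj : ∀ j ∈ B',
        MvPolynomial.degreeOf i (MvPolynomial.X s - MvPolynomial.C (b j)) ≤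
          if i = s then 1 else 0 := by
      intro j _
      refine (MvPolynomial.degreeOf_sub_le i _ _).trans ?_
      simp [MvPolynomial.degreeOf_X, MvPolynomial.degreeOf_C]
    refine (Finset.sum_le_sum hj).trans ?_
    split_ifs <;> simp
  refine (Finset.sum_le_sum (fun s _ => hs s)).trans ?_
  simp

/-- Symmetric Lagrange interpolation: for `0 ≤ d ≤ n-1` and `B = {β₁,…,β_n}` pairwise
distinct, every symmetric polynomial `h` in `n-d` variables of degree at most `d` in each
variable satisfies `h(X) = Σ_{B'⊆B, |B'|=d} h(B∖B') · R(X,B') / R(B∖B', B')`. -/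
theorem symmetric_lagrange_interpolation (K : Type*) [Field K] (n d : ℕ) (hd : d < n)
    (b : Fin n → K) (hb : Function.Injective b)
    (h : MvPolynomial (Fin (n - d)) K) (hsym : h.IsSymmetric)
    (hdeg : ∀ i, h.degreeOf i ≤ d) :
    h = ∑ B' : {s : Finset (Fin n) // s.card = d},
      MvPolynomial.C
        (MvPolynomial.eval
            (fun i => b ((B'.1ᶜ.orderIsoOfFin
              (by simp [Finset.card_compl, B'.2] : B'.1ᶜ.card = n - d)) i).1) h
          / RR B'.1ᶜ B'.1 b b) *
        ∏ s : Fin (n - d), ∏ j ∈ B'.1, (MvPolynomial.X s - MvPolynomial.C (b j)) := by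
  classical
  rw [← sub_eq_zero]
  set RHS := ∑ B' : {s : Finset (Fin n) // s.card = d},
      MvPolynomial.C
        (MvPolynomial.eval
            (fun i => b ((B'.1ᶜ.orderIsoOfFin
              (by simp [Finset.card_compl, B'.2] : B'.1ᶜ.card = n - d)) i).1) h
          / RR B'.1ᶜ B'.1 b b) *
        ∏ s : Fin (n - d), ∏ j ∈ B'.1, (MvPolynomial.X s - MvPolynomial.C (b j)) with hRHS
  set B : Finset K := Finset.univ.image b with hB
  have hBcard : B.card = n := by
    rw [hB, Finset.card_image_of_injective _ hb, Finset.card_univ, Fintype.card_fin]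
  apply mv_vanish (n - d) d B (by omega)
  · intro i
    refine (MvPolynomial.degreeOf_sub_le i _ _).trans ?_
    refine max_le (hdeg i) ?_
    refine (MvPolynomial.degreeOf_sum_le i _ _).trans ?_
    refine Finset.sup_le fun B' _ => ?_
    refine (MvPolynomial.degreeOf_mul_le i _ _).trans ?_
    simpa [B'.2] using degreeOf_term_le b B'.1 i
  · intro x hx hxB
    have hex : ∀ i, ∃ j, b j = x i := fun i => by
      obtain ⟨j, _, hj⟩ := Finset.mem_image.mp (hxB i); exact ⟨j, hj⟩
    choose σ hσ using hex
    have hσinj : Function.Injective σ := fun a c hac => hx (by rw [← hσ a, ← hσ c, hac])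
    have hxσ : x = b ∘ σ := funext fun i => (hσ i).symm
    set A : Finset (Fin n) := Finset.univ.image σ with hA
    have hAcard : A.card = n - d := by
      rw [hA, Finset.card_image_of_injective _ hσinj, Finset.card_univ, Fintype.card_fin]
    have hAc : Aᶜ.card = d := by
      rw [Finset.card_compl, hAcard, Fintype.card_fin]; omega
    have heval : MvPolynomial.eval x RHS =
        ∑ B' : {s : Finset (Fin n) // s.card = d},
          (MvPolynomial.eval
            (fun i => b ((B'.1ᶜ.orderIsoOfFin
              (by simp [Finset.card_compl, B'.2] : B'.1ᶜ.card = n - d)) i).1) h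
            / RR B'.1ᶜ B'.1 b b) *
          ∏ s : Fin (n - d), ∏ j ∈ B'.1, (x s - b j) := by
      rw [hRHS, map_sum]
      refine Finset.sum_congr rfl fun B' _ => ?_
      simp [MvPolynomial.eval_prod]
    have hzero : ∀ B' : {s : Finset (Fin n) // s.card = d}, B' ≠ ⟨Aᶜ, hAc⟩ →
        (MvPolynomial.eval
            (fun i => b ((B'.1ᶜ.orderIsoOfFin
              (by simp [Finset.card_compl, B'.2] : B'.1ᶜ.card = n - d)) i).1) h
            / RR B'.1ᶜ B'.1 b b) *
          ∏ s : Fin (n - d), ∏ j ∈ B'.1, (x s - b j) = 0 := by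
      intro B' hB'
      have hne : B'.1 ≠ Aᶜ := fun hc => hB' (Subtype.ext hc)
      have hnsub : ¬ B'.1 ⊆ Aᶜ := fun hsub =>
        hne (Finset.eq_of_subset_of_card_le hsub (by rw [hAc, B'.2]))
      obtain ⟨j, hjB', hjA⟩ := Finset.not_subset.mp hnsub
      have hjA' : j ∈ A := by simpa using hjA
      obtain ⟨s, _, hs⟩ := Finset.mem_image.mp hjA'
      have hz : ∏ s' : Fin (n - d), ∏ j' ∈ B'.1, (x s' - b j') = 0 := by
        apply Finset.prod_eq_zero (Finset.mem_univ s)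
        apply Finset.prod_eq_zero hjB'
        rw [← hs, ← hσ s, sub_self]
      rw [hz, mul_zero]
    have hRRne : RR (Aᶜᶜ) (Aᶜ) b b ≠ 0 := by
      rw [RR, Finset.prod_ne_zero_iff]
      intro i hi
      rw [Finset.prod_ne_zero_iff]
      intro j hj
      rw [compl_compl] at hi
      intro hij
      have hieq : i = j := hb (sub_eq_zero.mp hij)
      subst hieq
      exact (Finset.mem_compl.mp hj) hi
    have hprod : ∏ s : Fin (n - d), ∏ j ∈ Aᶜ, (x s - b j) = RR (Aᶜᶜ) (Aᶜ) b b := by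
      rw [RR, compl_compl, hA,
        Finset.prod_image (fun a _ c _ hac => hσinj hac)]
      exact Finset.prod_congr rfl fun s _ => Finset.prod_congr rfl fun j _ => by rw [hσ s]
    have hmainterm : ∀ (pf : (Aᶜᶜ).card = n - d),
        (MvPolynomial.eval
            (fun i => b (((Aᶜᶜ).orderIsoOfFin pf) i).1) h
            / RR (Aᶜᶜ) (Aᶜ) b b) *
          ∏ s : Fin (n - d), ∏ j ∈ Aᶜ, (x s - b j) = MvPolynomial.eval x h := by
      intro pf
      rw [hprod, div_mul_cancel₀ _ hRRne]
      apply eval_eq_of_range_eq h hsym _ x hx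
      have h1 : Set.range (fun i : Fin (n - d) => (((Aᶜᶜ).orderIsoOfFin pf) i).1) =
          (A : Set (Fin n)) := by
        ext a
        constructor
        · rintro ⟨i, rfl⟩
          have := Finset.coe_mem (((Aᶜᶜ).orderIsoOfFin pf) i)
          simpa using this
        · intro ha
          have ha' : a ∈ Aᶜᶜ := by simpa using ha
          exact ⟨((Aᶜᶜ).orderIsoOfFin pf).symm ⟨a, ha'⟩, by simp⟩
      have h2 : Set.range σ = (A : Set (Fin n)) := by
        rw [hA, Finset.coe_image, Finset.coe_univ, Set.image_univ]
      have hc1 : (fun i : Fin (n - d) => b ((((Aᶜᶜ).orderIsoOfFin pf) i).1)) =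
          b ∘ (fun i : Fin (n - d) => (((Aᶜᶜ).orderIsoOfFin pf) i).1) := rfl
      rw [hc1, hxσ, Set.range_comp, Set.range_comp, h1, h2]
    have hmain : MvPolynomial.eval x RHS = MvPolynomial.eval x h := by
      rw [heval,
        Finset.sum_eq_single_of_mem (⟨Aᶜ, hAc⟩ : {s : Finset (Fin n) // s.card = d})
          (Finset.mem_univ _) (fun B' _ hB' => hzero B' hB')]
      exact hmainterm _
    rw [map_sub, hmain, sub_self]

end
end

section
/- Let A be a set of m pairwise distinct elements of K, let 0 ≤ p ≤ m, let X = (x₁,…,x_r) be r indeterminates with r ≤ m−p, and let B be a set of at least p pairwise distinct elements of K. Then Σ_{A'⊆A, |A'|=p} R(A∖A', B) · R(X,A') / R(A∖A', A') = Σ_{B'⊆B, |B'|=p} R(A, B∖B') · R(X,B') / R(B', B∖B'), as an identity of polynomials in the variables X. -/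
noncomputable section

namespace ExchangeAux

open Finset MvPolynomial

variable {K : Type*} [Field K]

def Pt {ι : Type*} (r : ℕ) (S : Finset ι) (y : ι → K) : MvPolynomial (Fin r) K :=
  ∏ s : Fin r, ∏ i ∈ S, (X s - C (y i))

lemma Pt_zero {ι : Type*} (S : Finset ι) (y : ι → K) : Pt 0 S y = 1 := by
  simp [Pt]

lemma fse_C (r : ℕ) (d : K) :
    finSuccEquiv K r (C d) = Polynomial.C (C d) := by
  simp [finSuccEquiv_apply]

lemma fse_term {ι : Type*} (r : ℕ) (c : K) (S : Finset ι) (y : ι → K) :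
    finSuccEquiv K r (C c * Pt (r+1) S y)
      = Polynomial.C (C c * Pt r S y)
        * ∏ i ∈ S, (Polynomial.X - Polynomial.C (C (y i))) := by
  unfold Pt
  rw [Fin.prod_univ_succ]
  simp only [map_mul, map_prod, map_sub, finSuccEquiv_X_zero, finSuccEquiv_X_succ, fse_C]
  ring

section Shape

variable {ι σ : Type*} (r p : ℕ) (I : Finset σ) (c : σ → K) (S : σ → Finset ι) (y : ι → K)

lemma fse_sum_natDegree (hS : ∀ i ∈ I, (S i).card ≤ p) :
    (finSuccEquiv K r (∑ i ∈ I, C (c i) * Pt (r+1) (S i) y)).natDegree ≤ p := by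
  rw [map_sum]
  apply Polynomial.natDegree_sum_le_of_forall_le
  intro i hi
  rw [fse_term]
  refine le_trans (Polynomial.natDegree_mul_le) ?_
  rw [Polynomial.natDegree_C, zero_add]
  refine le_trans (Polynomial.natDegree_prod_le _ _) ?_
  refine le_trans (Finset.sum_le_card_nsmul _ _ 1 ?_) ?_
  · intro x _; exact (Polynomial.natDegree_X_sub_C _).le
  · simpa using hS i hi

lemma fse_sum_coeff (hS : ∀ i ∈ I, (S i).card = p) :
    (finSuccEquiv K r (∑ i ∈ I, C (c i) * Pt (r+1) (S i) y)).coeff p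
      = ∑ i ∈ I, C (c i) * Pt r (S i) y := by
  rw [map_sum, Polynomial.finset_sum_coeff]
  refine Finset.sum_congr rfl fun i hi => ?_
  rw [fse_term, Polynomial.coeff_C_mul]
  have hm : (∏ j ∈ S i, (Polynomial.X - Polynomial.C (C (y j) : MvPolynomial (Fin r) K))).Monic :=
    Polynomial.monic_prod_of_monic _ _ fun j _ => Polynomial.monic_X_sub_C _
  have hd : (∏ j ∈ S i, (Polynomial.X - Polynomial.C (C (y j) : MvPolynomial (Fin r) K))).natDegree = p := by
    rw [Polynomial.natDegree_prod_of_monic _ _ fun j _ => Polynomial.monic_X_sub_C _]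
    simp [hS i hi]
  rw [← hd, hm.coeff_natDegree, mul_one]

lemma fse_sum_eval (v : K) :
    Polynomial.eval (C v) (finSuccEquiv K r (∑ i ∈ I, C (c i) * Pt (r+1) (S i) y))
      = ∑ i ∈ I, C (c i * ∏ j ∈ S i, (v - y j)) * Pt r (S i) y := by
  rw [map_sum, Polynomial.eval_finset_sum]
  refine Finset.sum_congr rfl fun i hi => ?_
  rw [fse_term, Polynomial.eval_mul, Polynomial.eval_C, Polynomial.eval_prod]
  simp only [Polynomial.eval_sub, Polynomial.eval_X, Polynomial.eval_C]
  have hprod : (∏ x ∈ S i, ((C v : MvPolynomial (Fin r) K) - C (y x)))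
      = C (∏ j ∈ S i, (v - y j)) := by
    rw [map_prod]
    exact Finset.prod_congr rfl fun x _ => (C_sub _ _ _).symm
  rw [hprod, map_mul]
  ring

end Shape

lemma shaped_eq_of_eval {r p m : ℕ} (hpm : p < m) (x : Fin m → K) (hx : Function.Injective x)
    {F G : MvPolynomial (Fin (r+1)) K}
    (hF : (finSuccEquiv K r F).natDegree ≤ p) (hG : (finSuccEquiv K r G).natDegree ≤ p)
    (h : ∀ j, Polynomial.eval (C (x j)) (finSuccEquiv K r F)
            = Polynomial.eval (C (x j)) (finSuccEquiv K r G)) :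
    F = G := by
  apply (finSuccEquiv K r).injective
  have hz : finSuccEquiv K r F - finSuccEquiv K r G = 0 := by
    apply Polynomial.eq_zero_of_natDegree_lt_card_of_eval_eq_zero _
      (f := fun j : Fin m => (C (x j) : MvPolynomial (Fin r) K))
      ((C_injective _ K).comp hx)
    · intro i
      simp [Polynomial.eval_sub, h i, sub_self]
    · rw [Fintype.card_fin]
      exact lt_of_le_of_lt (le_trans (Polynomial.natDegree_sub_le _ _) (by simp [hF, hG])) hpm
  exact sub_eq_zero.mp hz

end ExchangeAux

-- appended part 3
namespace ExchangeAux

open Finset MvPolynomial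

variable {K : Type*} [Field K]

section RRlemmas

variable {ι κ : Type*}

lemma RR_empty_left (T : Finset κ) (y : ι → K) (z : κ → K) : RR ∅ T y z = 1 := by
  simp [RR]

lemma RR_swap (S : Finset ι) (T : Finset κ) (y : ι → K) (z : κ → K) :
    RR S T y z = (-1 : K) ^ (S.card * T.card) * RR T S z y := by
  unfold RR
  rw [Finset.prod_comm]
  calc ∏ j ∈ T, ∏ i ∈ S, (y i - z j)
      = ∏ j ∈ T, ((-1 : K) ^ S.card * ∏ i ∈ S, (z j - y i)) := by
        refine Finset.prod_congr rfl fun j _ => ?_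
        rw [← Finset.prod_const, ← Finset.prod_mul_distrib]
        exact Finset.prod_congr rfl fun i _ => by ring
    _ = (-1 : K) ^ (S.card * T.card) * ∏ j ∈ T, ∏ i ∈ S, (z j - y i) := by
        rw [Finset.prod_mul_distrib, Finset.prod_const, ← pow_mul, mul_comm S.card]
    _ = (-1 : K) ^ (S.card * T.card) * RR T S z y := by rw [mul_comm S.card]; rfl

lemma RR_insert_left [DecidableEq ι] {j : ι} {T : Finset ι} (hj : j ∉ T)
    (U : Finset κ) (y : ι → K) (z : κ → K) :
    RR (insert j T) U y z = (∏ i ∈ U, (y j - z i)) * RR T U y z := by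
  unfold RR
  rw [Finset.prod_insert hj]

end RRlemmas

section SuccAbove

variable {n : ℕ}

lemma compl_image_succAbove (j : Fin (n+1)) (S : Finset (Fin n)) :
    (S.image j.succAbove)ᶜ = insert j (Sᶜ.image j.succAbove) := by
  ext x
  simp only [Finset.mem_compl, Finset.mem_image, Finset.mem_insert]
  by_cases hx : x = j
  · subst hx
    constructor
    · intro _; exact Or.inl rfl
    · rintro _ ⟨y, _, hy⟩; exact Fin.succAbove_ne x y hy
  · obtain ⟨y, rfl⟩ := Fin.exists_succAbove_eq hx
    constructor
    · intro hns
      exact Or.inr ⟨y, fun hyS => hns ⟨y, hyS, rfl⟩, rfl⟩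
    · rintro (h | ⟨z, hz, hzy⟩) ⟨w, hw, hwy⟩
      · exact hx h
      · cases Fin.succAbove_right_injective hzy
        cases Fin.succAbove_right_injective hwy
        exact hz hw

lemma univ_eq_insert_image (j : Fin (n+1)) :
    (Finset.univ : Finset (Fin (n+1)))
      = insert j ((Finset.univ : Finset (Fin n)).image j.succAbove) := by
  have h := compl_image_succAbove j (∅ : Finset (Fin n))
  simp only [Finset.image_empty, Finset.compl_empty] at h
  exact h

lemma RR_image_left {κ : Type*} (j : Fin (n+1)) (S : Finset (Fin n)) (T : Finset κ)
    (y : Fin (n+1) → K) (z : κ → K) :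
    RR (S.image j.succAbove) T y z = RR S T (y ∘ j.succAbove) z := by
  unfold RR
  rw [Finset.prod_image (fun a _ b _ h => Fin.succAbove_right_injective h)]
  rfl

lemma RR_image_right {κ : Type*} (j : Fin (n+1)) (S : Finset κ) (T : Finset (Fin n))
    (y : κ → K) (z : Fin (n+1) → K) :
    RR S (T.image j.succAbove) y z = RR S T y (z ∘ j.succAbove) := by
  unfold RR
  refine Finset.prod_congr rfl fun i _ => ?_
  rw [Finset.prod_image (fun a _ b _ h => Fin.succAbove_right_injective h)]
  rfl

lemma image_preimage_eq (j : Fin (n+1)) {S : Finset (Fin (n+1))} (hj : j ∉ S) :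
    (S.preimage j.succAbove Fin.succAbove_right_injective.injOn).image j.succAbove = S := by
  classical
  rw [Finset.image_preimage]
  refine Finset.filter_true_of_mem fun x hx => ?_
  have hxj : x ≠ j := fun h => hj (h ▸ hx)
  obtain ⟨y, rfl⟩ := Fin.exists_succAbove_eq hxj
  exact ⟨y, rfl⟩

lemma preimage_image_eq (j : Fin (n+1)) (S : Finset (Fin n)) :
    (S.image j.succAbove).preimage j.succAbove Fin.succAbove_right_injective.injOn = S := by
  ext y
  simp [Finset.mem_preimage, Finset.mem_image, Fin.succAbove_right_injective.eq_iff]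

lemma sum_powersetCard_succAbove {M : Type*} [AddCommMonoid M] (p : ℕ) (j : Fin (n+1))
    (f : Finset (Fin (n+1)) → M) :
    ∑ S ∈ (Finset.powersetCard p (Finset.univ : Finset (Fin (n+1)))).filter (fun S => j ∉ S), f S
      = ∑ S ∈ Finset.powersetCard p (Finset.univ : Finset (Fin n)), f (S.image j.succAbove) := by
  classical
  refine Finset.sum_nbij'
    (i := fun S => S.preimage j.succAbove Fin.succAbove_right_injective.injOn)
    (j := fun S => S.image j.succAbove) ?_ ?_ ?_ ?_ ?_
  · intro a ha
    rw [Finset.mem_filter, Finset.mem_powersetCard_univ] at ha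
    rw [Finset.mem_powersetCard_univ]
    have himg := image_preimage_eq j ha.2
    calc (a.preimage j.succAbove Fin.succAbove_right_injective.injOn).card
        = ((a.preimage j.succAbove Fin.succAbove_right_injective.injOn).image j.succAbove).card :=
          (Finset.card_image_of_injective _ Fin.succAbove_right_injective).symm
      _ = a.card := by rw [himg]
      _ = p := ha.1
  · intro a ha
    rw [Finset.mem_powersetCard_univ] at ha
    rw [Finset.mem_filter, Finset.mem_powersetCard_univ]
    constructor
    · rw [Finset.card_image_of_injective _ Fin.succAbove_right_injective]; exact ha
    · intro hj
      obtain ⟨y, _, hy⟩ := Finset.mem_image.mp hj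
      exact Fin.succAbove_ne j y hy
  · intro a ha
    rw [Finset.mem_filter] at ha
    exact image_preimage_eq j ha.2
  · intro a _
    exact preimage_image_eq j a
  · intro a ha
    rw [Finset.mem_filter] at ha
    rw [image_preimage_eq j ha.2]

end SuccAbove

end ExchangeAux

namespace ExchangeAux

open Finset MvPolynomial

variable {K : Type*} [Field K]

lemma div_helper (g N w D : K) (hw : w ≠ 0) : (g * N) / (w * D) * w = g * (N / D) := by
  rw [mul_comm w D, ← div_div, div_mul_cancel₀ _ hw, mul_div_assoc]

lemma div_helper2 (x N D y : K) : (x * N) / D * y = (x * y) * (N / D) := by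
  ring

lemma fse_term_natDegree {ι : Type*} (r p : ℕ) (c : K) (S : Finset ι) (y : ι → K)
    (hS : S.card ≤ p) :
    (finSuccEquiv K r (C c * Pt (r+1) S y)).natDegree ≤ p := by
  rw [fse_term]
  refine le_trans (Polynomial.natDegree_mul_le) ?_
  rw [Polynomial.natDegree_C, zero_add]
  refine le_trans (Polynomial.natDegree_prod_le _ _) ?_
  refine le_trans (Finset.sum_le_card_nsmul _ _ 1 ?_) ?_
  · intro x _; exact (Polynomial.natDegree_X_sub_C _).le
  · simpa using hS

lemma fse_term_eval {ι : Type*} (r : ℕ) (c : K) (S : Finset ι) (y : ι → K) (v : K) :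
    Polynomial.eval (C v) (finSuccEquiv K r (C c * Pt (r+1) S y))
      = C (c * ∏ j ∈ S, (v - y j)) * Pt r S y := by
  rw [fse_term, Polynomial.eval_mul, Polynomial.eval_C, Polynomial.eval_prod]
  simp only [Polynomial.eval_sub, Polynomial.eval_X, Polynomial.eval_C]
  have hprod : (∏ x ∈ S, ((C v : MvPolynomial (Fin r) K) - C (y x)))
      = C (∏ j ∈ S, (v - y j)) := by
    rw [map_prod]
    exact Finset.prod_congr rfl fun x _ => (C_sub _ _ _).symm
  rw [hprod, map_mul]
  ring

lemma fse_term_coeff {ι : Type*} (r p : ℕ) (c : K) (S : Finset ι) (y : ι → K)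
    (hS : S.card = p) :
    (finSuccEquiv K r (C c * Pt (r+1) S y)).coeff p = C c * Pt r S y := by
  rw [fse_term, Polynomial.coeff_C_mul]
  have hm : (∏ j ∈ S, (Polynomial.X - Polynomial.C (C (y j) : MvPolynomial (Fin r) K))).Monic :=
    Polynomial.monic_prod_of_monic _ _ fun j _ => Polynomial.monic_X_sub_C _
  have hd : (∏ j ∈ S, (Polynomial.X - Polynomial.C (C (y j) : MvPolynomial (Fin r) K))).natDegree
      = p := by
    rw [Polynomial.natDegree_prod_of_monic _ _ fun j _ => Polynomial.monic_X_sub_C _]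
    simp [hS]
  rw [← hd, hm.coeff_natDegree, mul_one]

lemma Pt_image {n r : ℕ} (j : Fin (n+1)) (S : Finset (Fin n)) (y : Fin (n+1) → K) :
    Pt r (S.image j.succAbove) y = Pt r S (y ∘ j.succAbove) := by
  unfold Pt
  refine Finset.prod_congr rfl fun s _ => ?_
  rw [Finset.prod_image (fun a _ b _ h => Fin.succAbove_right_injective h)]
  rfl

lemma not_mem_image_succAbove {n : ℕ} (j : Fin (n+1)) (S : Finset (Fin n)) :
    j ∉ S.image j.succAbove := by
  intro h
  obtain ⟨y, _, hy⟩ := Finset.mem_image.mp h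
  exact Fin.succAbove_ne j y hy

lemma lemU : ∀ (nb p r : ℕ), r + p ≤ nb → ∀ (a : Fin p → K) (b : Fin nb → K),
    Function.Injective b →
    (∑ B' ∈ Finset.powersetCard p (Finset.univ : Finset (Fin nb)),
        C (RR B'ᶜ Finset.univ b a / RR B'ᶜ B' b b) * Pt r B' b)
      = Pt r Finset.univ a := by
  intro nb
  induction nb with
  | zero =>
    intro p r h a b hb
    obtain rfl : p = 0 := by omega
    obtain rfl : r = 0 := by omega
    simp [Pt_zero, RR]
  | succ n ih =>
    intro p r h a b hb
    have key : ∀ r' : ℕ, r' + 1 + p ≤ n + 1 →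
        (∑ B' ∈ Finset.powersetCard p (Finset.univ : Finset (Fin (n+1))),
            C (RR B'ᶜ Finset.univ b a / RR B'ᶜ B' b b) * Pt (r'+1) B' b)
          = Pt (r'+1) Finset.univ a := by
      intro r' hr'
      have hpn : p < n + 1 := by omega
      have hG1 : Pt (r'+1) (Finset.univ : Finset (Fin p)) a
          = C (1:K) * Pt (r'+1) Finset.univ a := by rw [map_one, one_mul]
      rw [hG1]
      apply shaped_eq_of_eval hpn b hb
      · refine fse_sum_natDegree _ _ _ _ _ _ (fun B' hB' => ?_)
        rw [Finset.mem_powersetCard_univ] at hB'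
        exact hB'.le
      · refine fse_term_natDegree _ _ _ _ _ ?_
        simp
      intro j
      rw [fse_sum_eval, fse_term_eval]
      rw [← Finset.sum_filter_add_sum_filter_not
        (Finset.powersetCard p (Finset.univ : Finset (Fin (n+1)))) (fun S => j ∈ S)]
      have hz : ∑ B' ∈ (Finset.powersetCard p (Finset.univ : Finset (Fin (n+1)))).filter
          (fun S => j ∈ S),
          C ((RR B'ᶜ Finset.univ b a / RR B'ᶜ B' b b) * ∏ i ∈ B', (b j - b i)) * Pt r' B' b
          = 0 := by
        refine Finset.sum_eq_zero fun B' hB' => ?_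
        rw [Finset.mem_filter] at hB'
        rw [show (∏ i ∈ B', (b j - b i)) = 0 from Finset.prod_eq_zero hB'.2 (sub_self (b j)),
          mul_zero, map_zero, zero_mul]
      rw [hz, zero_add, sum_powersetCard_succAbove p j]
      have hbc : Function.Injective (b ∘ j.succAbove) :=
        hb.comp Fin.succAbove_right_injective
      have hih := ih p r' (by omega) a (b ∘ j.succAbove) hbc
      have hterm : ∀ S ∈ Finset.powersetCard p (Finset.univ : Finset (Fin n)),
          C ((RR (S.image j.succAbove)ᶜ Finset.univ b a
              / RR (S.image j.succAbove)ᶜ (S.image j.succAbove) b b)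
            * ∏ i ∈ S.image j.succAbove, (b j - b i)) * Pt r' (S.image j.succAbove) b
          = C (∏ i, (b j - a i))
            * (C (RR Sᶜ Finset.univ (b ∘ j.succAbove) a
                / RR Sᶜ S (b ∘ j.succAbove) (b ∘ j.succAbove)) * Pt r' S (b ∘ j.succAbove)) := by
        intro S _
        have hw : (∏ i ∈ S, (b j - b (j.succAbove i))) ≠ 0 := by
          refine Finset.prod_ne_zero_iff.mpr fun i _ => ?_
          exact sub_ne_zero.mpr (fun hc => (Fin.succAbove_ne j i) (hb hc).symm)
        have hprodim : ∏ i ∈ S.image j.succAbove, (b j - b i)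
            = ∏ i ∈ S, (b j - b (j.succAbove i)) :=
          Finset.prod_image (fun a _ b _ h => Fin.succAbove_right_injective h)
        have hnum : RR (S.image j.succAbove)ᶜ Finset.univ b a
            = (∏ i, (b j - a i)) * RR Sᶜ Finset.univ (b ∘ j.succAbove) a := by
          rw [compl_image_succAbove, RR_insert_left (not_mem_image_succAbove j Sᶜ),
            RR_image_left]
        have hden : RR (S.image j.succAbove)ᶜ (S.image j.succAbove) b b
            = (∏ i ∈ S, (b j - b (j.succAbove i)))
              * RR Sᶜ S (b ∘ j.succAbove) (b ∘ j.succAbove) := by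
          rw [compl_image_succAbove, RR_insert_left (not_mem_image_succAbove j Sᶜ),
            RR_image_left, RR_image_right, hprodim]
        rw [hnum, hden, hprodim, div_helper _ _ _ _ hw, Pt_image, map_mul, mul_assoc]
      rw [Finset.sum_congr rfl hterm, ← Finset.mul_sum, hih, one_mul]
    match r, h with
    | r'+1, h => exact key r' h
    | 0, h =>
      rcases Nat.eq_or_lt_of_le (show p ≤ n+1 by omega) with hp | hp
      · subst hp
        have hcu : (Finset.univ : Finset (Fin (n+1))).card = n+1 := by simp
        have huniv : Finset.powersetCard (n+1) (Finset.univ : Finset (Fin (n+1)))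
            = {Finset.univ} := by
          have h0 := Finset.powersetCard_self (Finset.univ : Finset (Fin (n+1)))
          rw [hcu] at h0
          exact h0
        rw [huniv, Finset.sum_singleton, Finset.compl_univ, RR_empty_left, RR_empty_left,
          Pt_zero, Pt_zero]
        norm_num
      · have h1 := key 0 (by omega)
        have h2 := congrArg (fun F => (finSuccEquiv K 0 F).coeff p) h1
        rw [fse_sum_coeff _ _ _ _ _ _ (fun B' hB' => (Finset.mem_powersetCard_univ).mp hB')]
          at h2
        have hG1 : Pt (0+1) (Finset.univ : Finset (Fin p)) a
            = C (1:K) * Pt (0+1) Finset.univ a := by rw [map_one, one_mul]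
        rw [hG1, fse_term_coeff _ _ _ _ _ (by simp), map_one, one_mul] at h2
        exact h2

end ExchangeAux

namespace ExchangeAux

open Finset MvPolynomial

variable {K : Type*} [Field K]

lemma ratio_swap {p nb : ℕ} (a : Fin p → K) (b : Fin nb → K) (B' : Finset (Fin nb))
    (hB' : B'.card = p) :
    RR Finset.univ B'ᶜ a b / RR B' B'ᶜ b b = RR B'ᶜ Finset.univ b a / RR B'ᶜ B' b b := by
  rw [RR_swap B'ᶜ Finset.univ b a, RR_swap B'ᶜ B' b b, Finset.card_univ, Fintype.card_fin, hB']
  exact (mul_div_mul_left _ _ (pow_ne_zero _ (neg_ne_zero.mpr one_ne_zero))).symm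

lemma lemT_base (p nb : ℕ) (hB : p ≤ nb) (a : Fin p → K) (b : Fin nb → K)
    (hb : Function.Injective b) :
    (∑ A' ∈ Finset.powersetCard p (Finset.univ : Finset (Fin p)),
        C (RR A'ᶜ Finset.univ a b / RR A'ᶜ A' a a) * Pt 0 A' a)
      = ∑ B' ∈ Finset.powersetCard p (Finset.univ : Finset (Fin nb)),
        C (RR Finset.univ B'ᶜ a b / RR B' B'ᶜ b b) * Pt 0 B' b := by
  have hcu : (Finset.univ : Finset (Fin p)).card = p := by simp
  have huniv : Finset.powersetCard p (Finset.univ : Finset (Fin p)) = {Finset.univ} := by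
    have h0 := Finset.powersetCard_self (Finset.univ : Finset (Fin p))
    rw [hcu] at h0
    exact h0
  calc (∑ A' ∈ Finset.powersetCard p (Finset.univ : Finset (Fin p)),
        C (RR A'ᶜ Finset.univ a b / RR A'ᶜ A' a a) * Pt 0 A' a)
      = 1 := by
        rw [huniv, Finset.sum_singleton, Finset.compl_univ, RR_empty_left, RR_empty_left,
          Pt_zero]
        norm_num
    _ = Pt 0 (Finset.univ : Finset (Fin p)) a := (Pt_zero _ _).symm
    _ = ∑ B' ∈ Finset.powersetCard p (Finset.univ : Finset (Fin nb)),
          C (RR B'ᶜ Finset.univ b a / RR B'ᶜ B' b b) * Pt 0 B' b :=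
        (lemU nb p 0 (by omega) a b hb).symm
    _ = ∑ B' ∈ Finset.powersetCard p (Finset.univ : Finset (Fin nb)),
          C (RR Finset.univ B'ᶜ a b / RR B' B'ᶜ b b) * Pt 0 B' b := by
        refine Finset.sum_congr rfl fun B' hB' => ?_
        rw [ratio_swap a b B' (Finset.mem_powersetCard_univ.mp hB')]

lemma lemT : ∀ (m : ℕ) (p r nb : ℕ), p ≤ m → r + p ≤ m → p ≤ nb →
    ∀ (a : Fin m → K), Function.Injective a → ∀ (b : Fin nb → K), Function.Injective b →
    (∑ A' ∈ Finset.powersetCard p (Finset.univ : Finset (Fin m)),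
        C (RR A'ᶜ Finset.univ a b / RR A'ᶜ A' a a) * Pt r A' a)
      = ∑ B' ∈ Finset.powersetCard p (Finset.univ : Finset (Fin nb)),
        C (RR Finset.univ B'ᶜ a b / RR B' B'ᶜ b b) * Pt r B' b := by
  intro m
  induction m with
  | zero =>
    intro p r nb hp hr hB a ha b hb
    obtain rfl : p = 0 := by omega
    obtain rfl : r = 0 := by omega
    exact lemT_base 0 nb (by omega) a b hb
  | succ n ih =>
    intro p r nb hp hr hB a ha b hb
    have key : ∀ r' : ℕ, r' + 1 + p ≤ n + 1 →
        (∑ A' ∈ Finset.powersetCard p (Finset.univ : Finset (Fin (n+1))),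
            C (RR A'ᶜ Finset.univ a b / RR A'ᶜ A' a a) * Pt (r'+1) A' a)
          = ∑ B' ∈ Finset.powersetCard p (Finset.univ : Finset (Fin nb)),
            C (RR Finset.univ B'ᶜ a b / RR B' B'ᶜ b b) * Pt (r'+1) B' b := by
      intro r' hr'
      have hpn : p < n + 1 := by omega
      apply shaped_eq_of_eval hpn a ha
      · refine fse_sum_natDegree _ _ _ _ _ _ (fun A' hA' => ?_)
        rw [Finset.mem_powersetCard_univ] at hA'
        exact hA'.le
      · refine fse_sum_natDegree _ _ _ _ _ _ (fun B' hB' => ?_)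
        rw [Finset.mem_powersetCard_univ] at hB'
        exact hB'.le
      intro j
      rw [fse_sum_eval, fse_sum_eval]
      have hac : Function.Injective (a ∘ j.succAbove) :=
        ha.comp Fin.succAbove_right_injective
      -- left side
      have hleft : (∑ A' ∈ Finset.powersetCard p (Finset.univ : Finset (Fin (n+1))),
          C ((RR A'ᶜ Finset.univ a b / RR A'ᶜ A' a a) * ∏ i ∈ A', (a j - a i)) * Pt r' A' a)
          = C (∏ β, (a j - b β)) *
            ∑ S ∈ Finset.powersetCard p (Finset.univ : Finset (Fin n)),
              C (RR Sᶜ Finset.univ (a ∘ j.succAbove) b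
                / RR Sᶜ S (a ∘ j.succAbove) (a ∘ j.succAbove)) * Pt r' S (a ∘ j.succAbove) := by
        rw [← Finset.sum_filter_add_sum_filter_not
          (Finset.powersetCard p (Finset.univ : Finset (Fin (n+1)))) (fun S => j ∈ S)]
        have hz : ∑ A' ∈ (Finset.powersetCard p (Finset.univ : Finset (Fin (n+1)))).filter
            (fun S => j ∈ S),
            C ((RR A'ᶜ Finset.univ a b / RR A'ᶜ A' a a) * ∏ i ∈ A', (a j - a i)) * Pt r' A' a
            = 0 := by
          refine Finset.sum_eq_zero fun A' hA' => ?_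
          rw [Finset.mem_filter] at hA'
          rw [show (∏ i ∈ A', (a j - a i)) = 0 from
            Finset.prod_eq_zero hA'.2 (sub_self (a j)), mul_zero, map_zero, zero_mul]
        rw [hz, zero_add, sum_powersetCard_succAbove p j, Finset.mul_sum]
        refine Finset.sum_congr rfl fun S _ => ?_
        have hw : (∏ i ∈ S, (a j - a (j.succAbove i))) ≠ 0 := by
          refine Finset.prod_ne_zero_iff.mpr fun i _ => ?_
          exact sub_ne_zero.mpr (fun hc => (Fin.succAbove_ne j i) (ha hc).symm)
        have hprodim : ∏ i ∈ S.image j.succAbove, (a j - a i)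
            = ∏ i ∈ S, (a j - a (j.succAbove i)) :=
          Finset.prod_image (fun a' _ b' _ h => Fin.succAbove_right_injective h)
        have hnum : RR (S.image j.succAbove)ᶜ Finset.univ a b
            = (∏ β, (a j - b β)) * RR Sᶜ Finset.univ (a ∘ j.succAbove) b := by
          rw [compl_image_succAbove, RR_insert_left (not_mem_image_succAbove j Sᶜ),
            RR_image_left]
        have hden : RR (S.image j.succAbove)ᶜ (S.image j.succAbove) a a
            = (∏ i ∈ S, (a j - a (j.succAbove i)))
              * RR Sᶜ S (a ∘ j.succAbove) (a ∘ j.succAbove) := by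
          rw [compl_image_succAbove, RR_insert_left (not_mem_image_succAbove j Sᶜ),
            RR_image_left, RR_image_right, hprodim]
        rw [hnum, hden, hprodim, div_helper _ _ _ _ hw, Pt_image, map_mul, mul_assoc]
      -- right side
      have hright : (∑ B' ∈ Finset.powersetCard p (Finset.univ : Finset (Fin nb)),
          C ((RR Finset.univ B'ᶜ a b / RR B' B'ᶜ b b) * ∏ i ∈ B', (a j - b i)) * Pt r' B' b)
          = C (∏ β, (a j - b β)) *
            ∑ B' ∈ Finset.powersetCard p (Finset.univ : Finset (Fin nb)),
              C (RR Finset.univ B'ᶜ (a ∘ j.succAbove) b / RR B' B'ᶜ b b) * Pt r' B' b := by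
        rw [Finset.mul_sum]
        refine Finset.sum_congr rfl fun B' _ => ?_
        have hnum2 : RR (Finset.univ : Finset (Fin (n+1))) B'ᶜ a b
            = (∏ β ∈ B'ᶜ, (a j - b β)) * RR Finset.univ B'ᶜ (a ∘ j.succAbove) b := by
          rw [univ_eq_insert_image j, RR_insert_left (not_mem_image_succAbove j Finset.univ),
            RR_image_left]
        have hcomb : (∏ β ∈ B'ᶜ, (a j - b β)) * (∏ i ∈ B', (a j - b i))
            = ∏ β, (a j - b β) := by
          rw [mul_comm]
          exact Finset.prod_mul_prod_compl B' _
        rw [hnum2, div_helper2, hcomb, map_mul, mul_assoc]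
      rw [hleft, hright]
      congr 1
      exact ih p r' nb (by omega) (by omega) hB (a ∘ j.succAbove) hac b hb
    match r, hr with
    | r'+1, hr => exact key r' hr
    | 0, hr =>
      rcases Nat.eq_or_lt_of_le hp with hpe | hplt
      · subst hpe
        exact lemT_base (n+1) nb hB a b hb
      · have h1 := key 0 (by omega)
        have h2 := congrArg (fun F => (finSuccEquiv K 0 F).coeff p) h1
        rw [fse_sum_coeff _ _ _ _ _ _ (fun A' hA' => (Finset.mem_powersetCard_univ).mp hA'),
          fse_sum_coeff _ _ _ _ _ _ (fun B' hB' => (Finset.mem_powersetCard_univ).mp hB')] at h2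
        exact h2

end ExchangeAux

/-- Exchange Lemma with `r ≤ m - p` variables: for `A` of size `m`, `0 ≤ p ≤ m`,
`X = (x₁,…,x_r)` indeterminates with `r ≤ m-p`, and `B` of size `≥ p`, one has
`Σ_{A'⊆A,|A'|=p} R(A∖A',B)·R(X,A')/R(A∖A',A') = Σ_{B'⊆B,|B'|=p} R(A,B∖B')·R(X,B')/R(B',B∖B')`
as polynomials in `X`. -/
theorem exchange_lemma_few_variables (K : Type*) [Field K] (m p r nb : ℕ)
    (hp : p ≤ m) (hr : r ≤ m - p) (hB : p ≤ nb)
    (a : Fin m → K) (ha : Function.Injective a)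
    (b : Fin nb → K) (hb : Function.Injective b) :
    ∑ A' ∈ Finset.powersetCard p (Finset.univ : Finset (Fin m)),
      MvPolynomial.C (RR A'ᶜ (Finset.univ : Finset (Fin nb)) a b / RR A'ᶜ A' a a) *
        ∏ s : Fin r, ∏ i ∈ A', (MvPolynomial.X s - MvPolynomial.C (a i))
    = ∑ B' ∈ Finset.powersetCard p (Finset.univ : Finset (Fin nb)),
      MvPolynomial.C (RR (Finset.univ : Finset (Fin m)) B'ᶜ a b / RR B' B'ᶜ b b) *
        ∏ s : Fin r, ∏ j ∈ B', (MvPolynomial.X s - MvPolynomial.C (b j)) := by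
  exact ExchangeAux.lemT m p r nb hp (by omega) hB a ha b hb

end
end

section
/- Let A be a set of m pairwise distinct elements of K, let 0 ≤ d ≤ m, let X = (x₁,…,x_r) be r indeterminates with r ≤ m−d, and let B be a set of exactly d pairwise distinct elements of K. Then Σ_{A'⊆A, |A'|=d} R(A∖A', B) · R(X,A') / R(A∖A', A') = R(X,B), as an identity of polynomials in the variables X. -/
noncomputable section

lemma coeff_prod_X_sub_C {K : Type*} [CommRing K] [Nontrivial K] {κ : Type*} (T : Finset κ) (c : κ → K)
    (d : ℕ) (hT : T.card = d) :
    (∏ j ∈ T, (Polynomial.X - Polynomial.C (c j))).coeff d = 1 := by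
  have hm : (∏ i ∈ T, (Polynomial.X - Polynomial.C (c i))).Monic :=
    Polynomial.monic_prod_of_monic _ _ fun i _ => Polynomial.monic_X_sub_C _
  have hdeg : (∏ i ∈ T, (Polynomial.X - Polynomial.C (c i))).natDegree = d := by
    rw [Polynomial.natDegree_prod_of_monic _ _ fun i _ => Polynomial.monic_X_sub_C _]
    simp [Polynomial.natDegree_X, hT]
  rw [← hdeg]
  exact hm.coeff_natDegree


lemma coeff_step {K : Type*} [Field K] {ι : Type*} [DecidableEq ι] {d : ℕ} (a : ι → K)
    (b : Fin d → K) (A' S : Finset ι) (k : ι)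
    (hkS : k ∉ S) (hy : (∏ i ∈ A', (a k - a i)) ≠ 0) :
    RR (insert k S) (Finset.univ : Finset (Fin d)) a b / RR (insert k S) A' a a
      * ∏ i ∈ A', (a k - a i)
    = (∏ j : Fin d, (a k - b j)) * (RR S Finset.univ a b / RR S A' a a) := by
  simp only [RR, Finset.prod_insert hkS]
  rcases eq_or_ne (∏ i ∈ S, ∏ j ∈ A', (a i - a j)) 0 with h | h
  · simp [h]
  · field_simp


lemma finSuccEquiv_C' {K : Type*} [Field K] {r : ℕ} (x : K) :
    (MvPolynomial.finSuccEquiv K r) (MvPolynomial.C x)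
      = Polynomial.C (MvPolynomial.C x) := by
  simp [MvPolynomial.finSuccEquiv_apply]


lemma exchange_aux {K : Type*} [Field K] {ι : Type*} [DecidableEq ι] (d : ℕ) (b : Fin d → K) :
    ∀ n r : ℕ, ∀ (A : Finset ι) (a : ι → K), Set.InjOn a A →
      r + d ≤ A.card → 2 * A.card ≤ n + r →
      ∑ A' ∈ A.powersetCard d,
        MvPolynomial.C (RR (A \ A') Finset.univ a b / RR (A \ A') A' a a) *
          ∏ s : Fin r, ∏ i ∈ A', (MvPolynomial.X s - MvPolynomial.C (a i))
      = ∏ s : Fin r, ∏ j : Fin d, (MvPolynomial.X s - MvPolynomial.C (b j)) := by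
  intro n
  induction n with
  | zero =>
    intro r A a ha hcard hn
    have hr0 : r = 0 := by omega
    have hA : A.card = 0 := by omega
    subst hr0
    rw [Finset.card_eq_zero] at hA
    subst hA
    have hd0 : d = 0 := by omega
    subst hd0
    simp [RR]
  | succ n ih =>
    intro r A a ha hcard hn
    match r with
    | 0 =>
      rcases eq_or_lt_of_le (by omega : d ≤ A.card) with hc | hc
      · subst hc
        simp [Finset.powersetCard_self, RR]
      · have h1 := ih 1 A a ha (by omega) (by omega)
        have h2 := congrArg (MvPolynomial.aeval (fun _ : Fin 1 => (Polynomial.X : Polynomial K))) h1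
        simp only [map_sum, map_mul, map_prod, map_sub, MvPolynomial.aeval_X, MvPolynomial.aeval_C,
          Polynomial.algebraMap_eq, Fin.prod_univ_one] at h2
        have h3 := congrArg (fun p => Polynomial.coeff p d) h2
        simp only [Polynomial.finset_sum_coeff, Polynomial.coeff_C_mul] at h3
        rw [Finset.sum_congr rfl (fun A' hA' => by
              rw [coeff_prod_X_sub_C A' a d (Finset.mem_powersetCard.mp hA').2, mul_one]),
            coeff_prod_X_sub_C Finset.univ b d (by simp)] at h3
        simp only [Finset.univ_eq_empty, Finset.prod_empty, mul_one]
        rw [← map_sum, h3, map_one]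
    | (r + 1) =>
      have ihk : ∀ k ∈ A,
          ∑ A' ∈ (A.erase k).powersetCard d,
            MvPolynomial.C (RR ((A.erase k) \ A') Finset.univ a b /
                RR ((A.erase k) \ A') A' a a) *
              ∏ s : Fin r, ∏ i ∈ A', (MvPolynomial.X s - MvPolynomial.C (a i))
          = ∏ s : Fin r, ∏ j : Fin d, (MvPolynomial.X s - MvPolynomial.C (b j)) := by
        intro k hk
        have hce : (A.erase k).card = A.card - 1 := Finset.card_erase_of_mem hk
        exact ih r (A.erase k) a (ha.mono (Finset.coe_subset.mpr (Finset.erase_subset k A)))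
          (by omega) (by omega)
      classical
      simp only [Fin.prod_univ_succ]
      apply (MvPolynomial.finSuccEquiv K r).injective
      simp only [map_sum, map_mul, map_prod, map_sub, MvPolynomial.finSuccEquiv_X_zero,
        MvPolynomial.finSuccEquiv_X_succ, finSuccEquiv_C']
      rw [← sub_eq_zero]
      apply Polynomial.eq_zero_of_natDegree_lt_card_of_eval_eq_zero' _
        (A.image (fun k => (MvPolynomial.C (a k) : MvPolynomial (Fin r) K)))
      · -- evaluations vanish
        intro z hz
        obtain ⟨k, hk, rfl⟩ := Finset.mem_image.mp hz
        rw [Polynomial.eval_sub, sub_eq_zero]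
        simp only [Polynomial.eval_finset_sum, Polynomial.eval_mul, Polynomial.eval_prod,
          Polynomial.eval_sub, Polynomial.eval_X, Polynomial.eval_C]
        -- kill terms containing k
        rw [← Finset.sum_subset (Finset.powersetCard_mono (Finset.erase_subset k A))
          (fun A' hA' hA'' => by
            have hm := Finset.mem_powersetCard.mp hA'
            have hk' : k ∈ A' := by
              by_contra hk'
              exact hA'' (Finset.mem_powersetCard.mpr ⟨Finset.subset_erase.mpr ⟨hm.1, hk'⟩, hm.2⟩)
            have : ∏ i ∈ A', (MvPolynomial.C (a k) - MvPolynomial.C (a i))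
                = (0 : MvPolynomial (Fin r) K) :=
              Finset.prod_eq_zero hk' (by simp)
            rw [this, zero_mul, mul_zero])]
        have hstep : ∀ A' ∈ (A.erase k).powersetCard d,
            MvPolynomial.C (RR (A \ A') Finset.univ a b / RR (A \ A') A' a a) *
              ((∏ i ∈ A', (MvPolynomial.C (a k) - MvPolynomial.C (a i))) *
                ∏ s : Fin r, ∏ i ∈ A', (MvPolynomial.X s - MvPolynomial.C (a i)))
            = MvPolynomial.C (∏ j : Fin d, (a k - b j)) *
              (MvPolynomial.C (RR ((A.erase k) \ A') Finset.univ a b /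
                  RR ((A.erase k) \ A') A' a a) *
                ∏ s : Fin r, ∏ i ∈ A', (MvPolynomial.X s - MvPolynomial.C (a i))) := by
          intro A' hA'
          have hm := Finset.mem_powersetCard.mp hA'
          have hsubA : A' ⊆ A := hm.1.trans (Finset.erase_subset k A)
          have hkA' : k ∉ A' := fun h => (Finset.mem_erase.mp (hm.1 h)).1 rfl
          have hy : (∏ i ∈ A', (a k - a i)) ≠ 0 := by
            apply Finset.prod_ne_zero_iff.mpr
            intro i hi
            exact sub_ne_zero.mpr fun h => hkA' ((ha hk (hsubA hi) h) ▸ hi)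
          have hkS : k ∉ (A.erase k) \ A' := fun h => (Finset.mem_erase.mp (Finset.mem_sdiff.mp h).1).1 rfl
          have hins : insert k ((A.erase k) \ A') = A \ A' := by
            rw [Finset.erase_sdiff_comm, Finset.insert_erase
              (Finset.mem_sdiff.mpr ⟨hk, hkA'⟩)]
          have key := coeff_step a b A' ((A.erase k) \ A') k hkS hy
          rw [hins] at key
          calc MvPolynomial.C (RR (A \ A') Finset.univ a b / RR (A \ A') A' a a) *
              ((∏ i ∈ A', (MvPolynomial.C (a k) - MvPolynomial.C (a i))) *
                ∏ s : Fin r, ∏ i ∈ A', (MvPolynomial.X s - MvPolynomial.C (a i)))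
              = MvPolynomial.C ((RR (A \ A') Finset.univ a b / RR (A \ A') A' a a) *
                  ∏ i ∈ A', (a k - a i)) *
                ∏ s : Fin r, ∏ i ∈ A', (MvPolynomial.X s - MvPolynomial.C (a i)) := by
                simp only [← map_sub, ← map_prod, map_mul]; ring
            _ = _ := by rw [key, map_mul, mul_assoc]
        rw [Finset.sum_congr rfl hstep, ← Finset.mul_sum, ihk k hk]
        simp only [← map_sub, ← map_prod]
      · -- degree bound
        have himg : (A.image (fun k => (MvPolynomial.C (a k) : MvPolynomial (Fin r) K))).card
            = A.card := Finset.card_image_of_injOn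
          (fun x hx y hy hxy => ha hx hy (MvPolynomial.C_injective _ _ hxy))
        rw [himg]
        have hbound : ∀ (T : Finset ι) (P : Polynomial (MvPolynomial (Fin r) K))
            (c : MvPolynomial (Fin r) K), T.card = d → P.natDegree = 0 →
            (Polynomial.C c * ((∏ i ∈ T, (Polynomial.X - Polynomial.C (MvPolynomial.C (a i)))) *
              P)).natDegree ≤ d := by
          intro T P c hT hP
          refine (Polynomial.natDegree_mul_le).trans ?_
          rw [Polynomial.natDegree_C]
          refine le_trans (by exact le_of_eq (zero_add _)) ?_
          refine (Polynomial.natDegree_mul_le).trans ?_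
          rw [hP, add_zero]
          refine (Polynomial.natDegree_prod_le _ _).trans (le_of_eq ?_)
          rw [Finset.sum_congr rfl (fun i _ => Polynomial.natDegree_X_sub_C (R := MvPolynomial (Fin r) K) (MvPolynomial.C (a i))), Finset.sum_const, smul_eq_mul, mul_one, hT]
        have hlt : d < A.card := by omega
        refine lt_of_le_of_lt (le_trans (Polynomial.natDegree_sub_le _ _) (max_le ?_ ?_)) hlt
        · refine Polynomial.natDegree_sum_le_of_forall_le _ _ ?_
          intro A' hA'
          have hform : (∏ s : Fin r, ∏ i ∈ A', (Polynomial.C (MvPolynomial.X s) -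
              Polynomial.C (MvPolynomial.C (a i))))
              = Polynomial.C (∏ s : Fin r, ∏ i ∈ A', (MvPolynomial.X s - MvPolynomial.C (a i))) := by
            simp only [← Polynomial.C_sub, ← map_prod]
          rw [hform]
          exact hbound A' _ _ (Finset.mem_powersetCard.mp hA').2 (Polynomial.natDegree_C _)
        · have hform : (∏ s : Fin r, ∏ j : Fin d, (Polynomial.C (MvPolynomial.X s) -
              Polynomial.C (MvPolynomial.C (b j))))
              = Polynomial.C (∏ s : Fin r, ∏ j : Fin d, (MvPolynomial.X s - MvPolynomial.C (b j))) := by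
            simp only [← Polynomial.C_sub, ← map_prod]
          rw [hform]
          refine (Polynomial.natDegree_mul_le).trans ?_
          rw [Polynomial.natDegree_C, add_zero]
          refine (Polynomial.natDegree_prod_le _ _).trans (le_of_eq ?_)
          rw [Finset.sum_congr rfl (fun j _ => Polynomial.natDegree_X_sub_C
              (R := MvPolynomial (Fin r) K) (MvPolynomial.C (b j))),
            Finset.sum_const, smul_eq_mul, mul_one, Finset.card_univ, Fintype.card_fin]

/-- Exchange Lemma in the case `|B| = d`: for `A` of size `m`, `0 ≤ d ≤ m`,
`X = (x₁,…,x_r)` indeterminates with `r ≤ m-d`, and `B` of size exactly `d`, one has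
`Σ_{A'⊆A,|A'|=d} R(A∖A',B)·R(X,A')/R(A∖A',A') = R(X,B)` as polynomials in `X`. -/
theorem exchange_lemma_card_eq (K : Type*) [Field K] (m d r : ℕ)
    (hd : d ≤ m) (hr : r ≤ m - d)
    (a : Fin m → K) (ha : Function.Injective a)
    (b : Fin d → K) (hb : Function.Injective b) :
    ∑ A' ∈ Finset.powersetCard d (Finset.univ : Finset (Fin m)),
      MvPolynomial.C (RR A'ᶜ (Finset.univ : Finset (Fin d)) a b / RR A'ᶜ A' a a) *
        ∏ s : Fin r, ∏ i ∈ A', (MvPolynomial.X s - MvPolynomial.C (a i))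
    = ∏ s : Fin r, ∏ j : Fin d, (MvPolynomial.X s - MvPolynomial.C (b j)) := by
  classical
  have h := exchange_aux d b (2 * m) r (Finset.univ : Finset (Fin m)) a ha.injOn
    (by simp only [Finset.card_univ, Fintype.card_fin]; omega)
    (by simp only [Finset.card_univ, Fintype.card_fin]; omega)
  simpa only [Finset.compl_eq_univ_sdiff] using h

end
end

section
/- Let 0 ≤ p ≤ m, 0 ≤ q ≤ n and set d := p+q. If d ≤ min{m−1, n−1}, then Syl_{p,q}(A,B) = (−1)^{p(m−d)} · binom(d,p) · Syl_{0,d}(A,B) in K[x]. -/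
set_option linter.unusedSectionVars false
set_option linter.unusedVariables false
set_option maxHeartbeats 1600000

noncomputable section

/-- `R(x,S) := ∏_{c∈S} (x - c)` as a polynomial in the single variable `x`. -/
def RX {K : Type*} [CommRing K] {ι : Type*} (S : Finset ι) (y : ι → K) : Polynomial K :=
  ∏ i ∈ S, (Polynomial.X - Polynomial.C (y i))

/-- The monic polynomial `∏ᵢ (x - aᵢ)` with roots `a₁,…,a_m`. -/
def fpoly {K : Type*} [CommRing K] {m : ℕ} (a : Fin m → K) : Polynomial K :=
  ∏ i, (Polynomial.X - Polynomial.C (a i))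

/-- The Sylvester double sum
`Syl_{p,q}(A,B)(x) = Σ_{A'⊆A,|A'|=p; B'⊆B,|B'|=q}
  R(A',B')·R(A∖A',B∖B')·R(x,A')·R(x,B') / (R(A',A∖A')·R(B',B∖B'))`. -/
def Syl {K : Type*} [Field K] {m n : ℕ} (a : Fin m → K) (b : Fin n → K) (p q : ℕ) :
    Polynomial K :=
  ∑ A' ∈ Finset.powersetCard p (Finset.univ : Finset (Fin m)),
    ∑ B' ∈ Finset.powersetCard q (Finset.univ : Finset (Fin n)),
      Polynomial.C (RR A' B' a b * RR A'ᶜ B'ᶜ a b / (RR A' A'ᶜ a a * RR B' B'ᶜ b b)) *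
        RX A' a * RX B' b

open Finset Polynomial

section Residue
variable {F : Type*} [Field F] {ι : Type*} [DecidableEq ι]

lemma leadingCoeff_basis (v : ι → F) {s : Finset ι} (hvs : Set.InjOn v s) {i : ι} (hi : i ∈ s) :
    (Lagrange.basis s v i).leadingCoeff = ∏ j ∈ s.erase i, (v i - v j)⁻¹ := by
  rw [Lagrange.basis, leadingCoeff_prod]
  refine Finset.prod_congr rfl fun j hj => ?_
  have hne : v i ≠ v j := fun h => (mem_erase.mp hj).1 (hvs (mem_erase.mp hj).2 hi h.symm)
  rw [Lagrange.basisDivisor, leadingCoeff_mul, leadingCoeff_C, leadingCoeff_X_sub_C, mul_one]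

lemma coeff_basis (v : ι → F) {s : Finset ι} (hvs : Set.InjOn v s) {i : ι} (hi : i ∈ s) :
    (Lagrange.basis s v i).coeff (#s - 1) = ∏ j ∈ s.erase i, (v i - v j)⁻¹ := by
  rw [← leadingCoeff_basis v hvs hi, leadingCoeff, Lagrange.natDegree_basis hvs hi]

/-- residue sum lemma -/
lemma residue_sum (v : ι → F) {s : Finset ι} (hvs : Set.InjOn v s) (Q : F[X])
    (hQ : Q.degree < ((#s - 1 : ℕ) : WithBot ℕ)) :
    ∑ i ∈ s, Q.eval (v i) * ∏ j ∈ s.erase i, (v i - v j)⁻¹ = 0 := by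
  rcases Finset.eq_empty_or_nonempty s with rfl | hs
  · simp
  have hcard : (1 : ℕ) ≤ #s := hs.card_pos
  have hQs : Q.degree < (#s : WithBot ℕ) := lt_of_lt_of_le hQ (by exact_mod_cast Nat.sub_le _ _)
  have hinterp := Lagrange.eq_interpolate hvs hQs
  have h0 : Q.coeff (#s - 1) = (Lagrange.interpolate s v (fun i => Q.eval (v i))).coeff (#s - 1) := by
    conv_lhs => rw [hinterp]
  have hQ0 : Q.coeff (#s - 1) = 0 := Polynomial.coeff_eq_zero_of_degree_lt hQ
  rw [hQ0, Lagrange.interpolate_apply, Polynomial.finset_sum_coeff] at h0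
  symm
  rw [h0]
  refine Finset.sum_congr rfl fun i hi => ?_
  rw [Polynomial.coeff_C_mul, coeff_basis v hvs hi]

end Residue

section RRlem
variable {K : Type*} [CommRing K] {ι κ : Type*} [DecidableEq ι] [DecidableEq κ]
  {y : ι → K} {z : κ → K}

lemma RR_insert_left {S : Finset ι} {T : Finset κ} {i : ι} (h : i ∉ S) :
    RR (insert i S) T y z = (∏ j ∈ T, (y i - z j)) * RR S T y z := Finset.prod_insert h

lemma RR_insert_right {S : Finset ι} {T : Finset κ} {j : κ} (h : j ∉ T) :
    RR S (insert j T) y z = (∏ i ∈ S, (y i - z j)) * RR S T y z := by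
  unfold RR
  rw [← Finset.prod_mul_distrib]
  exact Finset.prod_congr rfl fun i _ => Finset.prod_insert h

lemma RR_erase_left {S : Finset ι} {T : Finset κ} {i : ι} (h : i ∈ S) :
    RR S T y z = (∏ j ∈ T, (y i - z j)) * RR (S.erase i) T y z := by
  conv_lhs => rw [← Finset.insert_erase h]
  rw [RR_insert_left (Finset.notMem_erase _ _)]

lemma RR_erase_right {S : Finset ι} {T : Finset κ} {j : κ} (h : j ∈ T) :
    RR S T y z = (∏ i ∈ S, (y i - z j)) * RR S (T.erase j) y z := by
  conv_lhs => rw [← Finset.insert_erase h]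
  rw [RR_insert_right (Finset.notMem_erase _ _)]

lemma prod_sub_comm (S : Finset ι) (f : ι → K) (c : K) :
    ∏ i ∈ S, (f i - c) = (-1) ^ #S * ∏ i ∈ S, (c - f i) := by
  rw [← Finset.prod_const, ← Finset.prod_mul_distrib]
  exact Finset.prod_congr rfl fun i _ => by ring

lemma eval_RX (c : K) (S : Finset ι) : (RX S y).eval c = ∏ i ∈ S, (c - y i) := by
  rw [RX, eval_prod]
  exact Finset.prod_congr rfl fun i _ => by simp

lemma RX_insert {S : Finset ι} {i : ι} (h : i ∉ S) :
    RX (insert i S) y = (X - C (y i)) * RX S y := Finset.prod_insert h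

lemma natDegree_RX (S : Finset ι) : (RX S y).natDegree ≤ #S := by
  refine le_trans (Polynomial.natDegree_prod_le _ _) ?_
  rw [Finset.card_eq_sum_ones]
  exact Finset.sum_le_sum fun i _ => Polynomial.natDegree_X_sub_C_le _

lemma degree_RX_mul_RX_le (S : Finset ι) (T : Finset κ) (w : κ → K) :
    (RX S y * RX T w).degree ≤ ((#S + #T : ℕ) : WithBot ℕ) := by
  refine le_trans (Polynomial.degree_mul_le _ _) ?_
  have h1 := Polynomial.degree_le_natDegree (p := RX S y)
  have h2 := Polynomial.degree_le_natDegree (p := RX T w)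
  calc (RX S y).degree + (RX T w).degree
      ≤ ((RX S y).natDegree : WithBot ℕ) + ((RX T w).natDegree : WithBot ℕ) :=
        add_le_add h1 h2
    _ ≤ ((#S : ℕ) : WithBot ℕ) + ((#T : ℕ) : WithBot ℕ) := by
        exact add_le_add (by exact_mod_cast natDegree_RX S) (by exact_mod_cast natDegree_RX T)
    _ = ((#S + #T : ℕ) : WithBot ℕ) := by push_cast; rfl

lemma erase_disjSum_inl {s : Finset ι} {t : Finset κ} (i : ι) :
    (s.disjSum t).erase (Sum.inl i) = (s.erase i).disjSum t := by
  ext x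
  cases x <;> simp [Finset.mem_erase, and_comm]

lemma erase_disjSum_inr {s : Finset ι} {t : Finset κ} (j : κ) :
    (s.disjSum t).erase (Sum.inr j) = s.disjSum (t.erase j) := by
  ext x
  cases x <;> simp [Finset.mem_erase, and_comm]

end RRlem

section nz
variable {K : Type*} [Field K] {ι κ : Type*} {y : ι → K} {z : κ → K}

lemma RR_ne_zero {S : Finset ι} {T : Finset κ} (h : ∀ i ∈ S, ∀ j ∈ T, y i ≠ z j) :
    RR S T y z ≠ 0 := by
  rw [RR, Finset.prod_ne_zero_iff]
  intro i hi
  rw [Finset.prod_ne_zero_iff]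
  intro j hj
  exact sub_ne_zero.mpr (h i hi j hj)

lemma prod_sub_ne_zero {T : Finset κ} {c : K} (h : ∀ j ∈ T, c ≠ z j) :
    (∏ j ∈ T, (c - z j)) ≠ 0 := by
  rw [Finset.prod_ne_zero_iff]
  exact fun j hj => sub_ne_zero.mpr (h j hj)

end nz

lemma neg_one_pow_congr' {R : Type*} [Monoid R] [HasDistribNeg R] {i j : ℕ} (h : i % 2 = j % 2) :
    (-1 : R) ^ i = (-1 : R) ^ j := by
  conv_lhs => rw [← Nat.div_add_mod i 2]
  conv_rhs => rw [← Nat.div_add_mod j 2]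
  rw [pow_add, pow_add, pow_mul, pow_mul, h, neg_one_sq, one_pow]
  simp

section Exchange

variable {F : Type*} [Field F] {m n : ℕ} (a : Fin m → F) (b : Fin n → F)

/-- One summand of the Sylvester double sum. -/
def sylTerm (A' : Finset (Fin m)) (B' : Finset (Fin n)) : F[X] :=
  Polynomial.C (RR A' B' a b * RR A'ᶜ B'ᶜ a b / (RR A' A'ᶜ a a * RR B' B'ᶜ b b)) *
    RX A' a * RX B' b

variable (hv : Function.Injective (Sum.elim a b))

section withinj
include hv

lemma a_inj : Function.Injective a := fun i j h => by
  have := hv (show Sum.elim a b (Sum.inl i) = Sum.elim a b (Sum.inl j) from h)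
  exact Sum.inl.inj this

lemma b_inj : Function.Injective b := fun i j h => by
  have := hv (show Sum.elim a b (Sum.inr i) = Sum.elim a b (Sum.inr j) from h)
  exact Sum.inr.inj this

lemma a_ne_b (i : Fin m) (j : Fin n) : a i ≠ b j := fun h => by
  have := hv (show Sum.elim a b (Sum.inl i) = Sum.elim a b (Sum.inr j) from h)
  simp at this

/-- Key cross-multiplied identity for the α-side coefficient. -/
lemma key_alpha (A'' : Finset (Fin m)) (B' : Finset (Fin n)) {α : Fin m} (hα : α ∈ A''ᶜ) :
    (RR (insert α A'') B' a b * RR (insert α A'')ᶜ B'ᶜ a b) *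
        (RR A'' A''ᶜ a a * RR B' B'ᶜ b b) *
        (∏ u ∈ (A''ᶜ.erase α).disjSum B'ᶜ, (a α - Sum.elim a b u)) =
      (RR A'' B' a b * RR A''ᶜ B'ᶜ a b) *
        ((-1) ^ #A'' * ((RX A'' a * RX B' b).eval (a α))) *
        (RR (insert α A'') (insert α A'')ᶜ a a * RR B' B'ᶜ b b) := by
  have hα' : α ∉ A'' := Finset.mem_compl.mp hα
  rw [Finset.compl_insert]
  rw [RR_insert_left (y := a) (z := b) hα']
  rw [RR_insert_left (y := a) (z := a) hα']
  rw [RR_erase_left (y := a) (z := b) hα]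
  rw [RR_erase_right (j := α) (y := a) (z := a) hα]
  rw [Finset.prod_disjSum]
  simp only [Sum.elim_inl, Sum.elim_inr]
  rw [eval_mul, eval_RX, eval_RX]
  rw [prod_sub_comm A'' a (a α)]
  ring

/-- Key cross-multiplied identity for the β-side coefficient. -/
lemma key_beta (A'' : Finset (Fin m)) (B' : Finset (Fin n)) {β : Fin n} (hβ : β ∈ B'ᶜ) :
    (RR A'' (insert β B') a b * RR A''ᶜ (insert β B')ᶜ a b) *
        (RR A'' A''ᶜ a a * RR B' B'ᶜ b b) *
        (∏ u ∈ A''ᶜ.disjSum (B'ᶜ.erase β), (b β - Sum.elim a b u)) =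
      (RR A'' B' a b * RR A''ᶜ B'ᶜ a b) *
        ((-1) ^ (m + #B') * ((RX A'' a * RX B' b).eval (b β))) *
        (RR A'' A''ᶜ a a * RR (insert β B') (insert β B')ᶜ b b) := by
  have hβ' : β ∉ B' := Finset.mem_compl.mp hβ
  rw [Finset.compl_insert]
  rw [RR_insert_right (y := a) (z := b) hβ']
  rw [RR_insert_left (y := b) (z := b) hβ']
  rw [RR_erase_right (y := a) (z := b) hβ]
  rw [RR_erase_right (y := b) (z := b) hβ]
  rw [Finset.prod_disjSum]
  simp only [Sum.elim_inl, Sum.elim_inr]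
  rw [eval_mul, eval_RX, eval_RX]
  rw [prod_sub_comm A'' a (b β), prod_sub_comm B' b (b β), prod_sub_comm A''ᶜ a (b β)]
  have hcard : #(A''ᶜ) = m - #A'' := by
    rw [Finset.card_compl, Fintype.card_fin]
  rw [hcard]
  have hsgn : (-1 : F) ^ (m - #A'') * (-1 : F) ^ (m + #B') =
      (-1 : F) ^ #A'' * (-1 : F) ^ #B' := by
    rw [← pow_add, ← pow_add]
    have h2 : (m - #A'') + (m + #B') = 2 * (m - #A'') + (#A'' + #B') := by
      have : #A'' ≤ m := by
        calc #A'' ≤ #(Finset.univ : Finset (Fin m)) := Finset.card_le_univ _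
          _ = m := by simp
      omega
    rw [h2, pow_add, pow_mul]
    norm_num
  linear_combination (-(∏ i ∈ A'', (b β - a i)) * (∏ i ∈ B', (b β - b i)) *
    (∏ i ∈ A''ᶜ, (b β - a i)) * (∏ j ∈ B'ᶜ.erase β, (b β - b j)) * RR A'' B' a b *
    RR A''ᶜ (B'ᶜ.erase β) a b * RR A'' A''ᶜ a a * RR B' (B'ᶜ.erase β) b b) * hsgn
lemma exchange (A'' : Finset (Fin m)) (B' : Finset (Fin n))
    (hsize : #A'' + #B' + 3 ≤ #(A''ᶜ) + #(B'ᶜ)) :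
    ∑ α ∈ A''ᶜ, sylTerm a b (insert α A'') B' =
      Polynomial.C ((-1 : F) ^ (m + (#A'' + #B' + 1))) *
        ∑ β ∈ B'ᶜ, sylTerm a b A'' (insert β B') := by
  classical
  have hainj := a_inj a b hv
  have hbinj := b_inj a b hv
  have hab := a_ne_b a b hv
  set v : Fin m ⊕ Fin n → F := Sum.elim a b with hv_def
  set s : Finset (Fin m ⊕ Fin n) := A''ᶜ.disjSum B'ᶜ with hs_def
  set P : F[X] := RX A'' a * RX B' b with hP_def
  set W : F := RR A'' B' a b * RR A''ᶜ B'ᶜ a b / (RR A'' A''ᶜ a a * RR B' B'ᶜ b b) with hW_def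
  have hcards : #s = #(A''ᶜ) + #(B'ᶜ) := Finset.card_disjSum _ _
  have hPdeg : P.degree ≤ ((#A'' + #B' : ℕ) : WithBot ℕ) := degree_RX_mul_RX_le _ _ _
  have hlt1 : P.degree < (((#s - 1 : ℕ)) : WithBot ℕ) :=
    lt_of_le_of_lt hPdeg (by exact_mod_cast (by omega : #A'' + #B' < #s - 1))
  have hXPdeg : (X * P).degree < ((#s - 1 : ℕ) : WithBot ℕ) := by
    refine lt_of_le_of_lt (degree_mul_le _ _) ?_
    have h0 : degree (X : F[X]) + P.degree ≤ (1 : WithBot ℕ) + ((#A'' + #B' : ℕ) : WithBot ℕ) :=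
      add_le_add degree_X_le hPdeg
    refine lt_of_le_of_lt h0 ?_
    have h1 : ((1 : WithBot ℕ)) + ((#A'' + #B' : ℕ) : WithBot ℕ) =
        (((#A'' + #B' + 1 : ℕ)) : WithBot ℕ) := by push_cast; ring
    rw [h1]
    exact_mod_cast (by omega : #A'' + #B' + 1 < #s - 1)
  set c : Fin m ⊕ Fin n → F := fun t => P.eval (v t) * (∏ u ∈ s.erase t, (v t - v u))⁻¹
    with hc_def
  have h1 : ∑ t ∈ s, c t = 0 := by
    have h := residue_sum v hv.injOn P hlt1
    rw [← h]
    exact Finset.sum_congr rfl fun t _ => by rw [hc_def, Finset.prod_inv_distrib]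
  have h2 : ∑ t ∈ s, c t * v t = 0 := by
    have h := residue_sum v hv.injOn (X * P) hXPdeg
    rw [← h]
    refine Finset.sum_congr rfl fun t _ => ?_
    rw [hc_def, Finset.prod_inv_distrib, eval_mul, eval_X]
    ring
  have hpoly : (∑ α ∈ A''ᶜ, Polynomial.C (c (Sum.inl α)) * (X - Polynomial.C (a α))) +
      (∑ β ∈ B'ᶜ, Polynomial.C (c (Sum.inr β)) * (X - Polynomial.C (b β))) = 0 := by
    have expand : ∑ t ∈ s, Polynomial.C (c t) * (X - Polynomial.C (v t)) =
        Polynomial.C (∑ t ∈ s, c t) * X - Polynomial.C (∑ t ∈ s, c t * v t) := by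
      rw [map_sum, map_sum, Finset.sum_mul, ← Finset.sum_sub_distrib]
      exact Finset.sum_congr rfl fun t _ => by rw [mul_sub, ← Polynomial.C_mul]
    have hz : ∑ t ∈ s, Polynomial.C (c t) * (X - Polynomial.C (v t)) = 0 := by
      rw [expand, h1, h2]; simp
    rw [hs_def, Finset.sum_disjSum] at hz
    simpa [hv_def] using hz
  -- nonvanishing facts
  have hRRa : ∀ S : Finset (Fin m), RR S Sᶜ a a ≠ 0 := fun S =>
    RR_ne_zero fun i hi j hj => hainj.ne fun e => (Finset.mem_compl.mp hj) (e ▸ hi)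
  have hRRb : ∀ T : Finset (Fin n), RR T Tᶜ b b ≠ 0 := fun T =>
    RR_ne_zero fun i hi j hj => hbinj.ne fun e => (Finset.mem_compl.mp hj) (e ▸ hi)
  have hWden : RR A'' A''ᶜ a a * RR B' B'ᶜ b b ≠ 0 := mul_ne_zero (hRRa _) (hRRb _)
  -- α-side term rewriting
  have hA : ∀ α ∈ A''ᶜ, sylTerm a b (insert α A'') B' =
      Polynomial.C (W * (-1) ^ #A'' * c (Sum.inl α)) * ((X - Polynomial.C (a α)) * P) := by
    intro α hα
    have hα' : α ∉ A'' := Finset.mem_compl.mp hα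
    have hprodne : (∏ u ∈ (A''ᶜ.erase α).disjSum B'ᶜ, (a α - Sum.elim a b u)) ≠ 0 := by
      rw [Finset.prod_disjSum]
      refine mul_ne_zero ?_ ?_
      · exact prod_sub_ne_zero fun j hj =>
          hainj.ne fun e => (Finset.mem_erase.mp hj).1 (by rw [e])
      · exact prod_sub_ne_zero fun j _ => hab α j
    have hLden : RR (insert α A'') (insert α A'')ᶜ a a * RR B' B'ᶜ b b ≠ 0 :=
      mul_ne_zero (hRRa _) (hRRb _)
    have hcα : c (Sum.inl α) =
        P.eval (a α) * (∏ u ∈ (A''ᶜ.erase α).disjSum B'ᶜ, (a α - Sum.elim a b u))⁻¹ := by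
      have hse : s.erase (Sum.inl α) = (A''ᶜ.erase α).disjSum B'ᶜ := by
        rw [hs_def]; exact erase_disjSum_inl α
      show eval (v (Sum.inl α)) P * (∏ u ∈ s.erase (Sum.inl α), (v (Sum.inl α) - v u))⁻¹ = _
      rw [hse]
      simp [hv_def]
    have hkey := key_alpha a b hv A'' B' hα
    have hcoef : RR (insert α A'') B' a b * RR (insert α A'')ᶜ B'ᶜ a b /
        (RR (insert α A'') (insert α A'')ᶜ a a * RR B' B'ᶜ b b) =
        W * (-1) ^ #A'' * c (Sum.inl α) := by
      rw [hcα, hW_def, hP_def]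
      have h' : RR (insert α A'') B' a b * RR (insert α A'')ᶜ B'ᶜ a b /
          (RR (insert α A'') (insert α A'')ᶜ a a * RR B' B'ᶜ b b) =
          (RR A'' B' a b * RR A''ᶜ B'ᶜ a b *
            ((-1) ^ #A'' * (RX A'' a * RX B' b).eval (a α))) /
          ((RR A'' A''ᶜ a a * RR B' B'ᶜ b b) *
            ∏ u ∈ (A''ᶜ.erase α).disjSum B'ᶜ, (a α - Sum.elim a b u)) := by
        rw [div_eq_div_iff hLden (mul_ne_zero hWden hprodne)]
        linear_combination hkey
      rw [h', div_eq_mul_inv, div_eq_mul_inv, mul_inv]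
      ring
    rw [sylTerm, RX_insert hα', hcoef, hP_def]
    ring
  -- β-side term rewriting
  have hB : ∀ β ∈ B'ᶜ, sylTerm a b A'' (insert β B') =
      Polynomial.C (W * (-1) ^ (m + #B') * c (Sum.inr β)) * ((X - Polynomial.C (b β)) * P) := by
    intro β hβ
    have hβ' : β ∉ B' := Finset.mem_compl.mp hβ
    have hprodne : (∏ u ∈ A''ᶜ.disjSum (B'ᶜ.erase β), (b β - Sum.elim a b u)) ≠ 0 := by
      rw [Finset.prod_disjSum]
      refine mul_ne_zero ?_ ?_
      · exact prod_sub_ne_zero fun j _ => (hab j β).symm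
      · exact prod_sub_ne_zero fun j hj =>
          hbinj.ne fun e => (Finset.mem_erase.mp hj).1 (by rw [e])
    have hLden : RR A'' A''ᶜ a a * RR (insert β B') (insert β B')ᶜ b b ≠ 0 :=
      mul_ne_zero (hRRa _) (hRRb _)
    have hcβ : c (Sum.inr β) =
        P.eval (b β) * (∏ u ∈ A''ᶜ.disjSum (B'ᶜ.erase β), (b β - Sum.elim a b u))⁻¹ := by
      have hse : s.erase (Sum.inr β) = A''ᶜ.disjSum (B'ᶜ.erase β) := by
        rw [hs_def]; exact erase_disjSum_inr β
      show eval (v (Sum.inr β)) P * (∏ u ∈ s.erase (Sum.inr β), (v (Sum.inr β) - v u))⁻¹ = _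
      rw [hse]
      simp [hv_def]
    have hkey := key_beta a b hv A'' B' hβ
    have hcoef : RR A'' (insert β B') a b * RR A''ᶜ (insert β B')ᶜ a b /
        (RR A'' A''ᶜ a a * RR (insert β B') (insert β B')ᶜ b b) =
        W * (-1) ^ (m + #B') * c (Sum.inr β) := by
      rw [hcβ, hW_def, hP_def]
      have h' : RR A'' (insert β B') a b * RR A''ᶜ (insert β B')ᶜ a b /
          (RR A'' A''ᶜ a a * RR (insert β B') (insert β B')ᶜ b b) =
          (RR A'' B' a b * RR A''ᶜ B'ᶜ a b *
            ((-1) ^ (m + #B') * (RX A'' a * RX B' b).eval (b β))) /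
          ((RR A'' A''ᶜ a a * RR B' B'ᶜ b b) *
            ∏ u ∈ A''ᶜ.disjSum (B'ᶜ.erase β), (b β - Sum.elim a b u)) := by
        rw [div_eq_div_iff hLden (mul_ne_zero hWden hprodne)]
        linear_combination hkey
      rw [h', div_eq_mul_inv, div_eq_mul_inv, mul_inv]
      ring
    rw [sylTerm, RX_insert hβ', hcoef, hP_def]
    ring
  rw [Finset.sum_congr rfl hA, Finset.sum_congr rfl hB]
  have hSA : ∑ α ∈ A''ᶜ, Polynomial.C (W * (-1) ^ #A'' * c (Sum.inl α)) *
      ((X - Polynomial.C (a α)) * P) =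
      Polynomial.C (W * (-1) ^ #A'') *
        (∑ α ∈ A''ᶜ, Polynomial.C (c (Sum.inl α)) * (X - Polynomial.C (a α))) * P := by
    rw [Finset.mul_sum, Finset.sum_mul]
    exact Finset.sum_congr rfl fun α _ => by rw [map_mul]; ring
  have hSB : ∑ β ∈ B'ᶜ, Polynomial.C (W * (-1) ^ (m + #B') * c (Sum.inr β)) *
      ((X - Polynomial.C (b β)) * P) =
      Polynomial.C (W * (-1) ^ (m + #B')) *
        (∑ β ∈ B'ᶜ, Polynomial.C (c (Sum.inr β)) * (X - Polynomial.C (b β))) * P := by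
    rw [Finset.mul_sum, Finset.sum_mul]
    exact Finset.sum_congr rfl fun β _ => by rw [map_mul]; ring
  rw [hSA, hSB]
  have hneg : (∑ α ∈ A''ᶜ, Polynomial.C (c (Sum.inl α)) * (X - Polynomial.C (a α))) =
      -(∑ β ∈ B'ᶜ, Polynomial.C (c (Sum.inr β)) * (X - Polynomial.C (b β))) :=
    eq_neg_of_add_eq_zero_left hpoly
  rw [hneg]
  have hsgn : (W * (-1 : F) ^ #A'') * (-1 : F) =
      (-1 : F) ^ (m + (#A'' + #B' + 1)) * (W * (-1) ^ (m + #B')) := by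
    have : (-1 : F) ^ (m + (#A'' + #B' + 1)) * (-1 : F) ^ (m + #B') = (-1 : F) ^ (#A'' + 1) := by
      rw [← pow_add]
      exact neg_one_pow_congr' (by omega)
    calc (W * (-1 : F) ^ #A'') * (-1 : F) = W * (-1 : F) ^ (#A'' + 1) := by ring
      _ = W * ((-1 : F) ^ (m + (#A'' + #B' + 1)) * (-1 : F) ^ (m + #B')) := by rw [this]
      _ = _ := by ring
  have hsgn' : -(W * (-1 : F) ^ #A'') =
      (-1 : F) ^ (m + (#A'' + #B' + 1)) * (W * (-1 : F) ^ (m + #B')) := by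
    rw [← hsgn]; ring
  calc Polynomial.C (W * (-1 : F) ^ #A'') *
        (-(∑ β ∈ B'ᶜ, Polynomial.C (c (Sum.inr β)) * (X - Polynomial.C (b β)))) * P
      = Polynomial.C (-(W * (-1 : F) ^ #A'')) *
        (∑ β ∈ B'ᶜ, Polynomial.C (c (Sum.inr β)) * (X - Polynomial.C (b β))) * P := by
        rw [map_neg]; ring
    _ = Polynomial.C ((-1 : F) ^ (m + (#A'' + #B' + 1)) * (W * (-1 : F) ^ (m + #B'))) *
        (∑ β ∈ B'ᶜ, Polynomial.C (c (Sum.inr β)) * (X - Polynomial.C (b β))) * P := by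
        rw [hsgn']
    _ = _ := by rw [map_mul]; ring
end withinj
end Exchange

lemma Syl_eq_sum {F : Type*} [Field F] {m n : ℕ} (a : Fin m → F) (b : Fin n → F) (p q : ℕ) :
    Syl a b p q = ∑ A' ∈ Finset.powersetCard p (Finset.univ : Finset (Fin m)),
      ∑ B' ∈ Finset.powersetCard q (Finset.univ : Finset (Fin n)), sylTerm a b A' B' := rfl

/-- Reindexing: summing over (p+1)-subsets with multiplicity p+1 equals summing over
p-subsets together with an extra element. -/
lemma sum_powersetCard_succ {M : Type*} [AddCommMonoid M] {γ : Type*} [Fintype γ]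
    [DecidableEq γ] (p : ℕ) (f : Finset γ → M) :
    ∑ A ∈ powersetCard (p + 1) (univ : Finset γ), (p + 1) • f A =
      ∑ A ∈ powersetCard p (univ : Finset γ), ∑ α ∈ Aᶜ, f (insert α A) := by
  have lhs_eq : ∀ A ∈ powersetCard (p + 1) (univ : Finset γ), (p + 1) • f A = ∑ _α ∈ A, f A := by
    intro A hA
    rw [Finset.sum_const, (Finset.mem_powersetCard.mp hA).2]
  rw [Finset.sum_congr rfl lhs_eq, Finset.sum_sigma', Finset.sum_sigma']
  refine Finset.sum_nbij' (fun x => ⟨x.1.erase x.2, x.2⟩) (fun x => ⟨insert x.2 x.1, x.2⟩)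
    ?_ ?_ ?_ ?_ ?_
  · rintro ⟨A, α⟩ hx
    simp only [Finset.mem_sigma, Finset.mem_powersetCard_univ, Finset.mem_compl] at hx ⊢
    obtain ⟨hcard, hα⟩ := hx
    exact ⟨by rw [Finset.card_erase_of_mem hα, hcard]; omega, by simp⟩
  · rintro ⟨A, α⟩ hx
    simp only [Finset.mem_sigma, Finset.mem_powersetCard_univ, Finset.mem_compl] at hx ⊢
    obtain ⟨hcard, hα⟩ := hx
    exact ⟨by rw [Finset.card_insert_of_notMem hα, hcard], Finset.mem_insert_self _ _⟩
  · rintro ⟨A, α⟩ hx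
    simp only [Finset.mem_sigma] at hx
    simp [Finset.insert_erase hx.2]
  · rintro ⟨A, α⟩ hx
    simp only [Finset.mem_sigma, Finset.mem_compl] at hx
    simp [Finset.erase_insert hx.2]
  · rintro ⟨A, α⟩ hx
    simp only [Finset.mem_sigma] at hx
    simp [Finset.insert_erase hx.2]

lemma syl_step {F : Type*} [Field F] {m n : ℕ} (a : Fin m → F) (b : Fin n → F)
    (hv : Function.Injective (Sum.elim a b)) (p q : ℕ)
    (hsz : p + q + 3 ≤ (m - p) + (n - q)) (hpm : p ≤ m) (hqn : q ≤ n) :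
    Polynomial.C (((p + 1 : ℕ) : F)) * Syl a b (p + 1) q =
      Polynomial.C ((-1 : F) ^ (m + (p + q + 1)) * ((q + 1 : ℕ) : F)) * Syl a b p (q + 1) := by
  classical
  have hL : Polynomial.C (((p + 1 : ℕ) : F)) * Syl a b (p + 1) q =
      ∑ A' ∈ powersetCard (p + 1) (univ : Finset (Fin m)),
        (p + 1) • ∑ B' ∈ powersetCard q (univ : Finset (Fin n)), sylTerm a b A' B' := by
    rw [Syl_eq_sum, Finset.mul_sum]
    refine Finset.sum_congr rfl fun A' _ => ?_
    rw [nsmul_eq_mul]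
    push_cast
    simp [Polynomial.C_eq_natCast]
  rw [hL, sum_powersetCard_succ]
  have hswap : ∀ A'' ∈ powersetCard p (univ : Finset (Fin m)),
      (∑ α ∈ A''ᶜ, ∑ B' ∈ powersetCard q (univ : Finset (Fin n)),
        sylTerm a b (insert α A'') B') =
      Polynomial.C ((-1 : F) ^ (m + (p + q + 1))) *
        ∑ B' ∈ powersetCard q (univ : Finset (Fin n)),
          ∑ β ∈ B'ᶜ, sylTerm a b A'' (insert β B') := by
    intro A'' hA
    have hcA : #A'' = p := (Finset.mem_powersetCard.mp hA).2
    rw [Finset.sum_comm, Finset.mul_sum]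
    refine Finset.sum_congr rfl fun B' hB => ?_
    have hcB : #B' = q := (Finset.mem_powersetCard.mp hB).2
    have hrw := exchange a b hv A'' B' (by
      rw [Finset.card_compl, Finset.card_compl, Fintype.card_fin, Fintype.card_fin, hcA, hcB]
      omega)
    rw [hcA, hcB] at hrw
    exact hrw
  rw [Finset.sum_congr rfl hswap, ← Finset.mul_sum]
  have hinner : ∀ A'' ∈ powersetCard p (univ : Finset (Fin m)),
      (∑ B' ∈ powersetCard q (univ : Finset (Fin n)),
        ∑ β ∈ B'ᶜ, sylTerm a b A'' (insert β B')) =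
      ∑ B'' ∈ powersetCard (q + 1) (univ : Finset (Fin n)), (q + 1) • sylTerm a b A'' B'' := by
    intro A'' _
    rw [sum_powersetCard_succ q (fun B'' => sylTerm a b A'' B'')]
  rw [Finset.sum_congr rfl hinner]
  rw [Syl_eq_sum, Polynomial.C_mul, mul_assoc]
  congr 1
  rw [Finset.mul_sum]
  refine Finset.sum_congr rfl fun A'' _ => ?_
  rw [Finset.mul_sum]
  refine Finset.sum_congr rfl fun B'' _ => ?_
  rw [nsmul_eq_mul]
  push_cast
  simp [Polynomial.C_eq_natCast]

theorem syl_generic {F : Type*} [Field F] [CharZero F] {m n : ℕ} (a : Fin m → F)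
    (b : Fin n → F) (hv : Function.Injective (Sum.elim a b)) :
    ∀ p q : ℕ, p + q < m → p + q < n →
      Syl a b p q = Polynomial.C ((-1 : F) ^ (p * (m + (p + q))) * (((p + q).choose p : ℕ) : F)) *
        Syl a b 0 (p + q) := by
  intro p
  induction p with
  | zero =>
    intro q _ _
    simp
  | succ p IH =>
    intro q hm hn
    have hstep := syl_step a b hv p q (by omega) (by omega) (by omega)
    have hIH := IH (q + 1) (by omega) (by omega)
    have hq1 : p + (q + 1) = p + 1 + q := by omega
    rw [hq1] at hIH
    have hC : (Polynomial.C (((p + 1 : ℕ) : F))) ≠ 0 := by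
      rw [Ne, Polynomial.C_eq_zero]
      exact_mod_cast Nat.succ_ne_zero p
    apply mul_left_cancel₀ hC
    rw [hstep, hIH]
    have hsign : (-1 : F) ^ (m + (p + q + 1)) * (-1 : F) ^ (p * (m + (p + 1 + q))) =
        (-1 : F) ^ ((p + 1) * (m + (p + 1 + q))) := by
      rw [← pow_add]
      congr 1
      ring
    have hchn := Nat.choose_succ_right_eq (p + 1 + q) p
    have h2 : p + 1 + q - p = q + 1 := by omega
    rw [h2] at hchn
    have hch : ((q + 1 : ℕ) : F) * (((p + 1 + q).choose p : ℕ) : F) =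
        ((p + 1 : ℕ) : F) * (((p + 1 + q).choose (p + 1) : ℕ) : F) := by
      exact_mod_cast congrArg (Nat.cast (R := F))
        (by rw [mul_comm, ← hchn, mul_comm] : (q + 1) * (p + 1 + q).choose p =
          (p + 1) * (p + 1 + q).choose (p + 1))
    rw [← mul_assoc, ← mul_assoc, ← Polynomial.C_mul, ← Polynomial.C_mul]
    congr 2
    calc (-1 : F) ^ (m + (p + q + 1)) * ((q + 1 : ℕ) : F) *
          ((-1 : F) ^ (p * (m + (p + 1 + q))) * (((p + 1 + q).choose p : ℕ) : F))
        = ((-1 : F) ^ (m + (p + q + 1)) * (-1 : F) ^ (p * (m + (p + 1 + q)))) *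
          (((q + 1 : ℕ) : F) * (((p + 1 + q).choose p : ℕ) : F)) := by ring
      _ = (-1 : F) ^ ((p + 1) * (m + (p + 1 + q))) *
          (((p + 1 : ℕ) : F) * (((p + 1 + q).choose (p + 1) : ℕ) : F)) := by rw [hsign, hch]
      _ = _ := by ring

def SylAux {K : Type*} [CommRing K] {m n : ℕ} (a : Fin m → K) (b : Fin n → K) (p q : ℕ) :
    Polynomial K :=
  ∑ A' ∈ Finset.powersetCard p (Finset.univ : Finset (Fin m)),
    ∑ B' ∈ Finset.powersetCard q (Finset.univ : Finset (Fin n)),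
      Polynomial.C (RR A' B' a b * RR A'ᶜ B'ᶜ a b *
          Ring.inverse (RR A' A'ᶜ a a * RR B' B'ᶜ b b)) *
        RX A' a * RX B' b

lemma Syl_eq_SylAux {K : Type*} [Field K] {m n : ℕ} (a : Fin m → K) (b : Fin n → K) (p q : ℕ) :
    Syl a b p q = SylAux a b p q := by
  unfold Syl SylAux
  simp_rw [Ring.inverse_eq_inv, div_eq_mul_inv]

lemma map_ringInverse {K K' : Type*} [CommRing K] [CommRing K'] (φ : K →+* K') {u : K}
    (h : IsUnit u) : φ (Ring.inverse u) = Ring.inverse (φ u) := by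
  obtain ⟨v, rfl⟩ := h
  rw [Ring.inverse_unit]
  have h2 : (φ : K →* K') ↑v = ↑(Units.map (φ : K →* K') v) := rfl
  calc φ ↑v⁻¹ = ↑((Units.map (φ : K →* K') v)⁻¹) := (Units.coe_map_inv _ v).symm
    _ = Ring.inverse ↑(Units.map (φ : K →* K') v) := (Ring.inverse_unit _).symm
    _ = Ring.inverse (φ ↑v) := by rw [← h2]; rfl

lemma map_RR {K K' : Type*} [CommRing K] [CommRing K'] (φ : K →+* K') {ι κ : Type*}
    (S : Finset ι) (T : Finset κ) (y : ι → K) (z : κ → K) :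
    φ (RR S T y z) = RR S T (φ ∘ y) (φ ∘ z) := by
  unfold RR
  rw [map_prod]
  refine Finset.prod_congr rfl fun i _ => ?_
  rw [map_prod]
  exact Finset.prod_congr rfl fun j _ => by simp

lemma map_RX {K K' : Type*} [CommRing K] [CommRing K'] (φ : K →+* K') {ι : Type*}
    (S : Finset ι) (y : ι → K) : (RX S y).map φ = RX S (φ ∘ y) := by
  unfold RX
  rw [Polynomial.map_prod]
  exact Finset.prod_congr rfl fun i _ => by simp

lemma map_SylAux {K K' : Type*} [CommRing K] [CommRing K'] (φ : K →+* K') {m n : ℕ}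
    (a : Fin m → K) (b : Fin n → K) (p q : ℕ)
    (hUa : ∀ A' : Finset (Fin m), IsUnit (RR A' A'ᶜ a a))
    (hUb : ∀ B' : Finset (Fin n), IsUnit (RR B' B'ᶜ b b)) :
    (SylAux a b p q).map φ = SylAux (φ ∘ a) (φ ∘ b) p q := by
  unfold SylAux
  rw [Polynomial.map_sum]
  refine Finset.sum_congr rfl fun A' _ => ?_
  rw [Polynomial.map_sum]
  refine Finset.sum_congr rfl fun B' _ => ?_
  rw [Polynomial.map_mul, Polynomial.map_mul, Polynomial.map_C, map_RX, map_RX]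
  congr 2
  rw [map_mul, map_mul, map_ringInverse φ ((hUa A').mul (hUb B'))]
  simp [map_RR, map_mul]

section Generic
variable (m n : ℕ)

abbrev Rgen := MvPolynomial (Fin m ⊕ Fin n) ℤ
abbrev Fgen := FractionRing (Rgen m n)

def Ggen : Set (Rgen m n) :=
  {x | (∃ i j : Fin m, i ≠ j ∧ x = MvPolynomial.X (Sum.inl i) - MvPolynomial.X (Sum.inl j)) ∨
       (∃ i j : Fin n, i ≠ j ∧ x = MvPolynomial.X (Sum.inr i) - MvPolynomial.X (Sum.inr j))}

def Sgen : Submonoid (Rgen m n) := Submonoid.closure (Ggen m n)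

abbrev Lgen := Localization (Sgen m n)

lemma Ggen_ne_zero : ∀ x ∈ Ggen m n, x ≠ 0 := by
  rintro x (⟨i, j, hij, rfl⟩ | ⟨i, j, hij, rfl⟩) <;>
    exact sub_ne_zero.mpr (MvPolynomial.X_injective.ne (by simp [hij]))

lemma Sgen_ne_zero : ∀ s ∈ Sgen m n, s ≠ 0 := by
  intro s hs
  have hsub : Sgen m n ≤ nonZeroDivisors (Rgen m n) := by
    rw [Sgen, Submonoid.closure_le]
    intro x hx
    exact mem_nonZeroDivisors_of_ne_zero (Ggen_ne_zero m n x hx)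
  exact nonZeroDivisors.ne_zero (hsub hs)

lemma Fgen_units : ∀ s : Sgen m n, IsUnit (algebraMap (Rgen m n) (Fgen m n) s) := by
  intro s
  rw [isUnit_iff_ne_zero, Ne, ← map_zero (algebraMap (Rgen m n) (Fgen m n)),
    (IsFractionRing.injective (Rgen m n) (Fgen m n)).eq_iff]
  exact Sgen_ne_zero m n s s.2

def iLF : Lgen m n →+* Fgen m n := IsLocalization.lift (Fgen_units m n)

lemma iLF_algebraMap (r : Rgen m n) :
    iLF m n (algebraMap (Rgen m n) (Lgen m n) r) = algebraMap (Rgen m n) (Fgen m n) r :=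
  IsLocalization.lift_eq _ r

lemma iLF_injective : Function.Injective (iLF m n) := by
  rw [injective_iff_map_eq_zero]
  intro x hx
  obtain ⟨r, s, rfl⟩ := IsLocalization.exists_mk'_eq (Sgen m n) x
  have hspec := IsLocalization.mk'_spec (Lgen m n) r s
  have := congrArg (iLF m n) hspec
  rw [map_mul, hx, zero_mul, iLF_algebraMap] at this
  have hr : r = 0 := by
    apply IsFractionRing.injective (Rgen m n) (Fgen m n)
    rw [map_zero, ← this]
  rw [hr, IsLocalization.mk'_zero]
end Generic

/-- For `0 ≤ p ≤ m`, `0 ≤ q ≤ n` and `d := p+q ≤ min{m-1,n-1}`,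
`Syl_{p,q}(A,B) = (-1)^{p(m-d)} · binom(d,p) · Syl_{0,d}(A,B)`. -/
theorem syl_double_to_single (K : Type*) [Field K] (m n p q : ℕ)
    (hp : p ≤ m) (hq : q ≤ n) (hdm : p + q < m) (hdn : p + q < n)
    (a : Fin m → K) (ha : Function.Injective a)
    (b : Fin n → K) (hb : Function.Injective b) :
    Syl a b p q =
      Polynomial.C ((-1 : K) ^ (p * (m - (p + q))) * ((p + q).choose p : K)) *
        Syl a b 0 (p + q) := by
  classical
  set d := p + q with hd
  let aR : Fin m → Rgen m n := fun i => MvPolynomial.X (Sum.inl i)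
  let bR : Fin n → Rgen m n := fun j => MvPolynomial.X (Sum.inr j)
  let aL : Fin m → Lgen m n := fun i => algebraMap _ _ (aR i)
  let bL : Fin n → Lgen m n := fun j => algebraMap _ _ (bR j)
  let aF : Fin m → Fgen m n := fun i => algebraMap _ _ (aR i)
  let bF : Fin n → Fgen m n := fun j => algebraMap _ _ (bR j)
  have hgen : Function.Injective (Sum.elim aF bF) := by
    have h0 : Sum.elim aF bF = (algebraMap (Rgen m n) (Fgen m n)) ∘ MvPolynomial.X := by
      funext t; cases t <;> rfl
    rw [h0]
    exact (IsFractionRing.injective _ _).comp MvPolynomial.X_injective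
  have hUa : ∀ A' : Finset (Fin m), IsUnit (RR A' A'ᶜ aL aL) := by
    intro A'
    have hmem : RR A' A'ᶜ aR aR ∈ Sgen m n := by
      rw [RR]
      refine Submonoid.prod_mem _ fun i hi => Submonoid.prod_mem _ fun j hj => ?_
      exact Submonoid.subset_closure
        (Or.inl ⟨i, j, fun e => (Finset.mem_compl.mp hj) (e ▸ hi), rfl⟩)
    have h1 : RR A' A'ᶜ aL aL = algebraMap (Rgen m n) (Lgen m n) (RR A' A'ᶜ aR aR) := by
      rw [map_RR]; rfl
    rw [h1]
    exact IsLocalization.map_units (Lgen m n) ⟨_, hmem⟩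
  have hUb : ∀ B' : Finset (Fin n), IsUnit (RR B' B'ᶜ bL bL) := by
    intro B'
    have hmem : RR B' B'ᶜ bR bR ∈ Sgen m n := by
      rw [RR]
      refine Submonoid.prod_mem _ fun i hi => Submonoid.prod_mem _ fun j hj => ?_
      exact Submonoid.subset_closure
        (Or.inr ⟨i, j, fun e => (Finset.mem_compl.mp hj) (e ▸ hi), rfl⟩)
    have h1 : RR B' B'ᶜ bL bL = algebraMap (Rgen m n) (Lgen m n) (RR B' B'ᶜ bR bR) := by
      rw [map_RR]; rfl
    rw [h1]
    exact IsLocalization.map_units (Lgen m n) ⟨_, hmem⟩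
  have hgenthm := syl_generic aF bF hgen p q hdm hdn
  rw [Syl_eq_SylAux, Syl_eq_SylAux] at hgenthm
  have haF : (iLF m n) ∘ aL = aF := funext fun i => iLF_algebraMap m n (aR i)
  have hbF : (iLF m n) ∘ bL = bF := funext fun j => iLF_algebraMap m n (bR j)
  rw [← haF, ← hbF, ← map_SylAux (iLF m n) aL bL p q hUa hUb,
    ← map_SylAux (iLF m n) aL bL 0 d hUa hUb] at hgenthm
  have hconst : (Polynomial.C ((-1 : Fgen m n) ^ (p * (m + d)) * ((d.choose p : ℕ) : Fgen m n))) =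
      (Polynomial.C ((-1 : Lgen m n) ^ (p * (m + d)) *
        ((d.choose p : ℕ) : Lgen m n))).map (iLF m n) := by
    rw [Polynomial.map_C]
    congr 1
    rw [map_mul, map_pow, map_neg, map_one, map_natCast]
  rw [hconst, ← Polynomial.map_mul] at hgenthm
  have hLeq := Polynomial.map_injective _ (iLF_injective m n) hgenthm
  -- push down to K
  let ψ' : Rgen m n →+* K := MvPolynomial.eval₂Hom (Int.castRingHom K) (Sum.elim a b)
  have hψ'X : ∀ t, ψ' (MvPolynomial.X t) = Sum.elim a b t := fun t =>
    MvPolynomial.eval₂Hom_X' _ _ _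
  have hKunits : ∀ s : Sgen m n, IsUnit (ψ' s) := by
    intro s
    refine Submonoid.closure_induction ?_ (by rw [map_one]; exact isUnit_one)
      (fun x y _ _ hx hy => by rw [map_mul]; exact hx.mul hy) s.2
    intro x hx
    simp only [Ggen, Set.mem_setOf_eq] at hx
    obtain ⟨i, j, hij, rfl⟩ | ⟨i, j, hij, rfl⟩ := hx <;>
      rw [map_sub, hψ'X, hψ'X, isUnit_iff_ne_zero] <;> simp only [Sum.elim_inl, Sum.elim_inr]
    · exact sub_ne_zero.mpr (ha.ne hij)
    · exact sub_ne_zero.mpr (hb.ne hij)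
  let ψ : Lgen m n →+* K := IsLocalization.lift hKunits
  have hψa : ψ ∘ aL = a := funext fun i => by
    show ψ (algebraMap _ _ (aR i)) = a i
    rw [IsLocalization.lift_eq]
    exact hψ'X (Sum.inl i)
  have hψb : ψ ∘ bL = b := funext fun j => by
    show ψ (algebraMap _ _ (bR j)) = b j
    rw [IsLocalization.lift_eq]
    exact hψ'X (Sum.inr j)
  have hfin := congrArg (Polynomial.map ψ) hLeq
  rw [map_SylAux ψ aL bL p q hUa hUb, Polynomial.map_mul, map_SylAux ψ aL bL 0 d hUa hUb,
    Polynomial.map_C, hψa, hψb] at hfin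
  rw [Syl_eq_SylAux a b p q, Syl_eq_SylAux a b 0 d, hfin]
  have hbase : (-1 : K) ^ (m + d) = (-1 : K) ^ (m - d) := neg_one_pow_congr' (by omega)
  congr 1
  rw [map_mul, map_pow, map_neg, map_one, map_natCast, mul_comm p (m + d),
    mul_comm p (m - d), pow_mul, pow_mul, hbase]

end
end

section
/- Let 0 ≤ p ≤ m, 0 ≤ q ≤ n and set d := p+q, and assume m ≤ d ≤ n−1. Fix A' ⊆ A with |A'| = p, let X = (x₁,…,x_{n−q}) be n−q indeterminates, and define H_{A'}(X) := Σ_{B'⊆B, |B'|=q} R(B∖B', A∖A') · R(X,B') / R(B∖B', B'). Then H_{A'}(X) = f_{A∖A'}(x₁)···f_{A∖A'}(x_{n−q}), where f_{A∖A'}(x) := ∏_{α∈A∖A'}(x − α). -/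
noncomputable section

open Polynomial Finset in
/-- The Lagrange-type coefficient. -/
private def co {K : Type*} [Field K] [DecidableEq K] (f : K[X]) (B B' : Finset K) : K :=
  (∏ β ∈ B \ B', f.eval β) / ∏ β ∈ B \ B', ∏ β' ∈ B', (β - β')

open Finset in
private lemma filter_powersetCard {α : Type*} [DecidableEq α] (q : ℕ) (B : Finset α) (x : α) :
    (B.powersetCard q).filter (fun B' => x ∉ B') = (B.erase x).powersetCard q := by
  ext B'
  simp only [mem_filter, mem_powersetCard, subset_erase]
  tauto

open Polynomial Finset in
private lemma co_erase {K : Type*} [Field K] [DecidableEq K] (f : K[X]) (B B' : Finset K)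
    (x : K) (hx : x ∈ B) (hB' : B' ⊆ B.erase x) :
    co f B B' * ∏ β' ∈ B', (x - β') = f.eval x * co f (B.erase x) B' := by
  have hxB' : x ∉ B' := fun h => (Finset.mem_erase.1 (hB' h)).1 rfl
  have hmem : x ∈ B \ B' := Finset.mem_sdiff.2 ⟨hx, hxB'⟩
  have hnm : x ∉ B.erase x \ B' := fun h => (Finset.mem_erase.1 (Finset.mem_sdiff.1 h).1).1 rfl
  have hins : B \ B' = insert x (B.erase x \ B') := by
    rw [Finset.erase_sdiff_comm, Finset.insert_erase hmem]
  have hP : (∏ β' ∈ B', (x - β')) ≠ 0 :=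
    Finset.prod_ne_zero_iff.2 fun β' hβ' => sub_ne_zero.2 fun h => hxB' (h ▸ hβ')
  unfold co
  rw [hins, Finset.prod_insert hnm, Finset.prod_insert hnm, div_mul_eq_mul_div,
    mul_comm (f.eval x * ∏ β ∈ B.erase x \ B', f.eval β) (∏ β' ∈ B', (x - β')),
    mul_div_mul_left _ _ hP, mul_div_assoc]

open Polynomial Finset in
private lemma key_step {K : Type*} [Field K] [DecidableEq K] (q : ℕ) (f : K[X])
    (hf : f.natDegree ≤ q) (r : ℕ) (B : Finset K) (hB : B.card = q + r + 1)
    (IH : ∀ B : Finset K, B.card = q + r →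
      ∑ B' ∈ B.powersetCard q, MvPolynomial.C (co f B B') *
          ∏ s : Fin r, ∏ β ∈ B', (MvPolynomial.X s - MvPolynomial.C β)
        = ∏ s : Fin r, Polynomial.aeval (MvPolynomial.X s : MvPolynomial (Fin r) K) f) :
    ∑ B' ∈ B.powersetCard q, Polynomial.C (MvPolynomial.C (co f B B')) *
        ((∏ β ∈ B', (Polynomial.X - Polynomial.C (MvPolynomial.C (σ := Fin r) β))) *
          Polynomial.C (∏ s : Fin r, ∏ β ∈ B', (MvPolynomial.X s - MvPolynomial.C β)))
      = Polynomial.aeval (Polynomial.X : Polynomial (MvPolynomial (Fin r) K)) f *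
          Polynomial.C (∏ s : Fin r,
            Polynomial.aeval (MvPolynomial.X s : MvPolynomial (Fin r) K) f) := by
  set R := MvPolynomial (Fin r) K with hRdef
  have haevalX : (Polynomial.aeval (Polynomial.X : Polynomial R) f) =
      f.map (algebraMap K R) := by
    rw [Polynomial.aeval_def, IsScalarTower.algebraMap_eq K R (Polynomial R),
      Polynomial.algebraMap_eq]
    rfl
  apply Polynomial.eq_of_degree_sub_lt_of_eval_finset_eq
      (B.image (fun β => (MvPolynomial.C β : R)))
  · -- degree bound
    have hcard : (B.image (fun β => (MvPolynomial.C β : R))).card = q + r + 1 := by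
      rw [Finset.card_image_of_injective _ (MvPolynomial.C_injective _ _), hB]
    have hq : ((q : ℕ) : WithBot ℕ) < ((q + r + 1 : ℕ) : WithBot ℕ) := by
      exact_mod_cast Nat.lt_succ_of_le (Nat.le_add_right q r)
    rw [hcard]
    refine lt_of_le_of_lt (Polynomial.degree_sub_le _ _) (max_lt ?_ ?_)
    · refine lt_of_le_of_lt (natDegree_le_iff_degree_le.mp ?_) hq
      refine Polynomial.natDegree_sum_le_of_forall_le _ _ fun B' hB' => ?_
      have hcardB' : B'.card = q := (Finset.mem_powersetCard.1 hB').2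
      calc (Polynomial.C (MvPolynomial.C (co f B B')) *
            ((∏ β ∈ B', (Polynomial.X - Polynomial.C (MvPolynomial.C (σ := Fin r) β))) *
              Polynomial.C (∏ s : Fin r, ∏ β ∈ B',
                (MvPolynomial.X s - MvPolynomial.C β)))).natDegree
          ≤ (Polynomial.C (MvPolynomial.C (co f B B'))).natDegree +
            ((∏ β ∈ B', (Polynomial.X - Polynomial.C (MvPolynomial.C (σ := Fin r) β))) *
              Polynomial.C (∏ s : Fin r, ∏ β ∈ B',
                (MvPolynomial.X s - MvPolynomial.C β))).natDegree :=
            Polynomial.natDegree_mul_le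
        _ ≤ 0 + ((∏ β ∈ B', (Polynomial.X - Polynomial.C (MvPolynomial.C (σ := Fin r) β))).natDegree
              + (Polynomial.C (∏ s : Fin r, ∏ β ∈ B',
                  (MvPolynomial.X s - MvPolynomial.C β))).natDegree) := by
            gcongr
            · exact le_of_eq (Polynomial.natDegree_C _)
            · exact Polynomial.natDegree_mul_le
        _ ≤ 0 + (q + 0) := by
            gcongr
            · refine le_trans (Polynomial.natDegree_prod_le _ _) ?_
              refine le_trans (Finset.sum_le_card_nsmul _ _ 1 fun β _ => ?_) ?_
              · exact le_of_eq (Polynomial.natDegree_X_sub_C _)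
              · simp [hcardB']
            · exact le_of_eq (Polynomial.natDegree_C _)
        _ ≤ q := by omega
    · refine lt_of_le_of_lt (natDegree_le_iff_degree_le.mp ?_) hq
      refine le_trans Polynomial.natDegree_mul_le ?_
      rw [haevalX, Polynomial.natDegree_C, add_zero]
      exact le_trans Polynomial.natDegree_map_le hf
  · -- evaluation at the points C β₀, β₀ ∈ B
    intro x hx
    obtain ⟨β₀, hβ₀, rfl⟩ := Finset.mem_image.1 hx
    -- RHS evaluation
    have hR : Polynomial.eval (MvPolynomial.C β₀ : R)
          (Polynomial.aeval (Polynomial.X : Polynomial R) f *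
            Polynomial.C (∏ s : Fin r, Polynomial.aeval (MvPolynomial.X s : R) f))
        = MvPolynomial.C (f.eval β₀) *
            ∏ s : Fin r, Polynomial.aeval (MvPolynomial.X s : R) f := by
      rw [Polynomial.eval_mul, Polynomial.eval_C]
      congr 1
      rw [haevalX, Polynomial.eval_map, ← Polynomial.aeval_def,
        ← MvPolynomial.algebraMap_eq, Polynomial.aeval_algebraMap_apply_eq_algebraMap_eval,
        MvPolynomial.algebraMap_eq]
    rw [hR]
    -- LHS evaluation
    rw [Polynomial.eval_finset_sum]
    have hterm : ∀ B' ∈ B.powersetCard q,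
        Polynomial.eval (MvPolynomial.C β₀ : R)
          (Polynomial.C (MvPolynomial.C (co f B B')) *
            ((∏ β ∈ B', (Polynomial.X - Polynomial.C (MvPolynomial.C (σ := Fin r) β))) *
              Polynomial.C (∏ s : Fin r, ∏ β ∈ B', (MvPolynomial.X s - MvPolynomial.C β))))
        = MvPolynomial.C (co f B B' * ∏ β ∈ B', (β₀ - β)) *
            ∏ s : Fin r, ∏ β ∈ B', (MvPolynomial.X s - MvPolynomial.C β) := by
      intro B' _
      rw [Polynomial.eval_mul, Polynomial.eval_mul, Polynomial.eval_C, Polynomial.eval_C,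
        Polynomial.eval_prod]
      have : ∀ β ∈ B', Polynomial.eval (MvPolynomial.C β₀ : R)
          (Polynomial.X - Polynomial.C (MvPolynomial.C (σ := Fin r) β))
          = MvPolynomial.C (β₀ - β) := fun β _ => by
        rw [Polynomial.eval_sub, Polynomial.eval_X, Polynomial.eval_C, map_sub]
      rw [Finset.prod_congr rfl this,
        ← map_prod (MvPolynomial.C : K →+* MvPolynomial (Fin r) K), map_mul, mul_assoc]
    rw [Finset.sum_congr rfl hterm]
    rw [← Finset.sum_filter_add_sum_filter_not (B.powersetCard q) (fun B' => β₀ ∈ B')]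
    have h1 : ∑ B' ∈ (B.powersetCard q).filter (fun B' => β₀ ∈ B'),
        MvPolynomial.C (co f B B' * ∏ β ∈ B', (β₀ - β)) *
          ∏ s : Fin r, ∏ β ∈ B', (MvPolynomial.X s - MvPolynomial.C β) = 0 := by
      refine Finset.sum_eq_zero fun B' hB' => ?_
      have hβ : β₀ ∈ B' := (Finset.mem_filter.1 hB').2
      rw [Finset.prod_eq_zero hβ (sub_self β₀), mul_zero, map_zero, zero_mul]
    rw [h1, zero_add, filter_powersetCard]
    have h2 : ∀ B' ∈ (B.erase β₀).powersetCard q,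
        MvPolynomial.C (co f B B' * ∏ β ∈ B', (β₀ - β)) *
          ∏ s : Fin r, ∏ β ∈ B', (MvPolynomial.X s - MvPolynomial.C β)
        = MvPolynomial.C (f.eval β₀) *
            (MvPolynomial.C (co f (B.erase β₀) B') *
              ∏ s : Fin r, ∏ β ∈ B', (MvPolynomial.X s - MvPolynomial.C β)) := by
      intro B' hB'
      rw [co_erase f B B' β₀ hβ₀ (Finset.mem_powersetCard.1 hB').1, map_mul, mul_assoc]
    rw [Finset.sum_congr rfl h2, ← Finset.mul_sum]
    congr 1
    exact IH (B.erase β₀) (by rw [Finset.card_erase_of_mem hβ₀, hB]; omega)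

open Polynomial Finset in
private lemma aux {K : Type*} [Field K] [DecidableEq K] (q : ℕ) (f : K[X])
    (hf : f.natDegree ≤ q) :
    ∀ (r : ℕ) (B : Finset K), B.card = q + r →
    ∑ B' ∈ B.powersetCard q, MvPolynomial.C (co f B B') *
        ∏ s : Fin r, ∏ β ∈ B', (MvPolynomial.X s - MvPolynomial.C β)
      = ∏ s : Fin r, Polynomial.aeval (MvPolynomial.X s : MvPolynomial (Fin r) K) f := by
  intro r
  induction r with
  | zero =>
    intro B hB
    rw [Nat.add_zero] at hB
    rw [← hB, Finset.powersetCard_self, Finset.sum_singleton]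
    simp [co]
  | succ r IH =>
    intro B hB
    apply (MvPolynomial.finSuccEquiv K r).injective
    have hEC : ∀ c : K, MvPolynomial.finSuccEquiv K r (MvPolynomial.C c)
        = Polynomial.C (MvPolynomial.C c) := fun c => by
      simp [MvPolynomial.finSuccEquiv_apply]
    have hL : MvPolynomial.finSuccEquiv K r (∑ B' ∈ B.powersetCard q, MvPolynomial.C (co f B B') *
        ∏ s : Fin (r+1), ∏ β ∈ B', (MvPolynomial.X s - MvPolynomial.C β)) =
        ∑ B' ∈ B.powersetCard q, Polynomial.C (MvPolynomial.C (co f B B')) *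
          ((∏ β ∈ B', (Polynomial.X - Polynomial.C (MvPolynomial.C (σ := Fin r) β))) *
            Polynomial.C (∏ s : Fin r, ∏ β ∈ B', (MvPolynomial.X s - MvPolynomial.C β))) := by
      rw [map_sum]
      refine Finset.sum_congr rfl fun B' _ => ?_
      rw [map_mul, hEC, map_prod, Fin.prod_univ_succ]
      refine congrArg (HMul.hMul _) ?_
      refine congrArg₂ (· * ·) ?_ ?_
      · rw [map_prod]
        refine Finset.prod_congr rfl fun β _ => ?_
        rw [map_sub, hEC, MvPolynomial.finSuccEquiv_X_zero]
      · have hsucc : ∀ s : Fin r, MvPolynomial.finSuccEquiv K r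
            (∏ β ∈ B', (MvPolynomial.X s.succ - MvPolynomial.C β))
            = Polynomial.C (∏ β ∈ B', (MvPolynomial.X s - MvPolynomial.C β)) := by
          intro s
          have hfac : ∀ β ∈ B', MvPolynomial.finSuccEquiv K r
              (MvPolynomial.X s.succ - MvPolynomial.C β)
              = Polynomial.C (MvPolynomial.X s - MvPolynomial.C β) := fun β _ => by
            rw [map_sub, hEC, MvPolynomial.finSuccEquiv_X_succ, ← map_sub]
          rw [map_prod, Finset.prod_congr rfl hfac,
            ← map_prod (Polynomial.C : MvPolynomial (Fin r) K →+* _)]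
        rw [Finset.prod_congr rfl fun s _ => hsucc s,
          ← map_prod (Polynomial.C : MvPolynomial (Fin r) K →+* _)]
    have hRH : MvPolynomial.finSuccEquiv K r (∏ s : Fin (r+1),
          Polynomial.aeval (MvPolynomial.X s : MvPolynomial (Fin (r+1)) K) f) =
        Polynomial.aeval (Polynomial.X : Polynomial (MvPolynomial (Fin r) K)) f *
          Polynomial.C (∏ s : Fin r,
            Polynomial.aeval (MvPolynomial.X s : MvPolynomial (Fin r) K) f) := by
      rw [map_prod, Fin.prod_univ_succ]
      refine congrArg₂ (· * ·) ?_ ?_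
      · rw [← Polynomial.aeval_algHom_apply (MvPolynomial.finSuccEquiv K r),
          MvPolynomial.finSuccEquiv_X_zero]
      · have hsucc : ∀ s : Fin r, MvPolynomial.finSuccEquiv K r
            (Polynomial.aeval (MvPolynomial.X s.succ : MvPolynomial (Fin (r+1)) K) f)
            = Polynomial.C (Polynomial.aeval (MvPolynomial.X s : MvPolynomial (Fin r) K) f) := by
          intro s
          rw [← Polynomial.aeval_algHom_apply (MvPolynomial.finSuccEquiv K r),
            MvPolynomial.finSuccEquiv_X_succ, ← Polynomial.algebraMap_eq,
            Polynomial.aeval_algebraMap_apply, Polynomial.algebraMap_eq]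
        rw [Finset.prod_congr rfl fun s _ => hsucc s,
          ← map_prod (Polynomial.C : MvPolynomial (Fin r) K →+* _)]
    exact hL.trans ((key_step q f hf r B hB IH).trans hRH.symm)

open Polynomial Finset in
/-- For `0 ≤ p ≤ m`, `0 ≤ q ≤ n`, `d := p+q` with `m ≤ d ≤ n-1`, and `A' ⊆ A` with
`|A'| = p`, the polynomial
`H_{A'}(X) := Σ_{B'⊆B,|B'|=q} R(B∖B',A∖A') · R(X,B') / R(B∖B',B')`
equals `f_{A∖A'}(x₁) ⋯ f_{A∖A'}(x_{n-q})`, where `f_{A∖A'}(x) := ∏_{α∈A∖A'} (x-α)`. -/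
theorem H_eq_prod (K : Type*) [Field K] (m n p q : ℕ)
    (hp : p ≤ m) (hq : q ≤ n) (hmd : m ≤ p + q) (hdn : p + q < n)
    (a : Fin m → K) (ha : Function.Injective a)
    (b : Fin n → K) (hb : Function.Injective b)
    (A' : Finset (Fin m)) (hA' : A'.card = p) :
    ∑ B' ∈ Finset.powersetCard q (Finset.univ : Finset (Fin n)),
      MvPolynomial.C (RR B'ᶜ A'ᶜ b a / RR B'ᶜ B' b b) *
        ∏ s : Fin (n - q), ∏ j ∈ B', (MvPolynomial.X s - MvPolynomial.C (b j))
    = ∏ s : Fin (n - q), ∏ i ∈ A'ᶜ, (MvPolynomial.X s - MvPolynomial.C (a i)) := by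
  classical
  set f : K[X] := ∏ i ∈ A'ᶜ, (Polynomial.X - Polynomial.C (a i)) with hfdef
  have hfdeg : f.natDegree ≤ q := by
    have : f.natDegree = A'ᶜ.card := by
      rw [hfdef, Polynomial.natDegree_prod _ _ fun i _ => Polynomial.X_sub_C_ne_zero (a i)]
      simp [Polynomial.natDegree_X_sub_C]
    rw [this, Finset.card_compl, hA', Fintype.card_fin]
    omega
  set B : Finset K := Finset.image b Finset.univ with hBdef
  have hBcard : B.card = q + (n - q) := by
    rw [hBdef, Finset.card_image_of_injective _ hb, Finset.card_univ, Fintype.card_fin]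
    omega
  have main := aux q f hfdeg (n - q) B hBcard
  have hRHS : (∏ s : Fin (n - q),
      Polynomial.aeval (MvPolynomial.X s : MvPolynomial (Fin (n - q)) K) f)
      = ∏ s : Fin (n - q), ∏ i ∈ A'ᶜ, (MvPolynomial.X s - MvPolynomial.C (a i)) := by
    refine Finset.prod_congr rfl fun s _ => ?_
    rw [hfdef, map_prod]
    refine Finset.prod_congr rfl fun i _ => ?_
    rw [map_sub, Polynomial.aeval_X, Polynomial.aeval_C, MvPolynomial.algebraMap_eq]
  rw [← hRHS, ← main]
  refine Finset.sum_bij (fun B' _ => B'.image b) ?_ ?_ ?_ ?_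
  · intro B' hB'
    rw [Finset.mem_powersetCard]
    refine ⟨Finset.image_subset_image (Finset.subset_univ B'), ?_⟩
    rw [Finset.card_image_of_injective _ hb, (Finset.mem_powersetCard.1 hB').2]
  · intro B₁ h₁ B₂ h₂ h
    exact Finset.image_injective hb h
  · intro B'' hB''
    have hsub : B'' ⊆ B := (Finset.mem_powersetCard.1 hB'').1
    have himg2 : (Finset.univ.filter (fun j => b j ∈ B'')).image b = B'' := by
      ext x
      simp only [Finset.mem_image, Finset.mem_filter, Finset.mem_univ, true_and]
      constructor
      · rintro ⟨j, hj, rfl⟩; exact hj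
      · intro hx
        obtain ⟨j, _, rfl⟩ := Finset.mem_image.1 (hsub hx)
        exact ⟨j, hx, rfl⟩
    refine ⟨Finset.univ.filter (fun j => b j ∈ B''), ?_, himg2⟩
    rw [Finset.mem_powersetCard]
    refine ⟨Finset.subset_univ _, ?_⟩
    rw [← Finset.card_image_of_injective _ hb, himg2, (Finset.mem_powersetCard.1 hB'').2]
  · intro B' hB'
    have himg : ∀ (S : Finset (Fin n)), ∏ β ∈ S.image b, ∏ β' ∈ B'.image b, (β - β')
        = RR S B' b b := by
      intro S
      rw [Finset.prod_image (fun x _ y _ h => hb h)]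
      unfold RR
      refine Finset.prod_congr rfl fun j _ => ?_
      rw [Finset.prod_image (fun x _ y _ h => hb h)]
    have hcompl : B \ B'.image b = B'ᶜ.image b := by
      rw [hBdef, Finset.compl_eq_univ_sdiff, Finset.image_sdiff _ _ hb]
    have hco : co f B (B'.image b) = RR B'ᶜ A'ᶜ b a / RR B'ᶜ B' b b := by
      unfold co
      rw [hcompl]
      congr 1
      · rw [Finset.prod_image (fun x _ y _ h => hb h)]
        unfold RR
        refine Finset.prod_congr rfl fun j _ => ?_
        rw [hfdef, Polynomial.eval_prod]
        refine Finset.prod_congr rfl fun i _ => ?_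
        rw [Polynomial.eval_sub, Polynomial.eval_X, Polynomial.eval_C]
      · exact himg B'ᶜ
    rw [hco]
    congr 1
    refine Finset.prod_congr rfl fun s _ => ?_
    rw [Finset.prod_image (fun x _ y _ h => hb h)]

end
end
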